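/- arXiv:math/0405576 — 9 statements merged into one kernel-verified Lean document; each statement's English description precedes it below -/
import Mathlib

section
/- For all x, y in 𝔤, the set {(α,γ) ∈ J × (I∖J) : x_α^γ · y_γ^α ≠ 0} is finite, and likewise the set {(α,γ) ∈ (I∖J) × J : x_α^γ · y_γ^α ≠ 0} is finite; hence both sums in the definition of c(x,y) have only finitely many nonzero terms and c(x,y) is well defined. -/
/-- For all `x, y ∈ 𝔤`, the set
`{(α,γ) ∈ J × (I∖J) : x_α^γ · y_γ^α ≠ 0}` is finite, and likewise the set
`{(α,γ) ∈ (I∖J) × J : x_α^γ · y_γ^α ≠ 0}` is finite, where the matrix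
coefficients are given by `x_γ^α = (b.repr ⁅x, b α⁆) γ`. -/
theorem stmt0 (K : Type*) [Field K] [CharZero K]
    (L : Type*) [LieRing L] [LieAlgebra K L]
    (W : Type*) [AddCommGroup W] [Module K W] [LieRingModule L W] [LieModule K L W]
    (I : Type*) (b : Module.Basis I K W) (J : Set I)
    (hJ : ∀ x : L, {α ∈ J | ⁅x, b α⁆ ∉ Submodule.span K (⇑b '' J)}.Finite)
    (x y : L) :
    {p : I × I | p.1 ∈ J ∧ p.2 ∉ J ∧
        b.repr ⁅x, b p.2⁆ p.1 * b.repr ⁅y, b p.1⁆ p.2 ≠ 0}.Finite ∧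
    {p : I × I | p.1 ∉ J ∧ p.2 ∈ J ∧
        b.repr ⁅x, b p.2⁆ p.1 * b.repr ⁅y, b p.1⁆ p.2 ≠ 0}.Finite := by
  constructor
  · refine Set.Finite.subset ((hJ y).biUnion (fun α _ =>
      (Set.finite_singleton α).prod (b.repr ⁅y, b α⁆).support.finite_toSet)) ?_
    rintro ⟨α, γ⟩ ⟨hα, hγ, hne⟩
    have hy : b.repr ⁅y, b α⁆ γ ≠ 0 := right_ne_zero_of_mul hne
    have hmem : α ∈ {α ∈ J | ⁅y, b α⁆ ∉ Submodule.span K (⇑b '' J)} :=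
      ⟨hα, fun hsp => hγ ((b.mem_span_image).1 hsp (Finsupp.mem_support_iff.2 hy))⟩
    exact Set.mem_biUnion hmem ⟨rfl, Finsupp.mem_support_iff.2 hy⟩
  · refine Set.Finite.subset ((hJ x).biUnion (fun γ _ =>
      (b.repr ⁅x, b γ⁆).support.finite_toSet.prod (Set.finite_singleton γ))) ?_
    rintro ⟨α, γ⟩ ⟨hα, hγ, hne⟩
    have hx : b.repr ⁅x, b γ⁆ α ≠ 0 := left_ne_zero_of_mul hne
    have hmem : γ ∈ {α ∈ J | ⁅x, b α⁆ ∉ Submodule.span K (⇑b '' J)} :=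
      ⟨hγ, fun hsp => hα ((b.mem_span_image).1 hsp (Finsupp.mem_support_iff.2 hx))⟩
    exact Set.mem_biUnion hmem ⟨Finsupp.mem_support_iff.2 hx, rfl⟩
end

section
/- The bilinear form c is a Lie algebra 2-cocycle on 𝔤 with values in K: for all x, y, z ∈ 𝔤, c(x,y) = −c(y,x) and c(x,[y,z]) + c(y,[z,x]) + c(z,[x,y]) = 0. Hence c determines a cohomology class in H²(𝔤; K). -/
open scoped Classical in
/-- The 2-cocycle `c(x,y) = Σ_{α∈J, γ∈I∖J} x_α^γ y_γ^α − Σ_{α∈I∖J, γ∈J} x_α^γ y_γ^α`,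
where `x_γ^α = (b.repr ⁅x, b α⁆) γ` and the (possibly infinite) sums are taken as
finite sums over their finitely many nonzero terms (`finsum`). -/
noncomputable def fockCocycle {K : Type*} [Field K] {L : Type*} [LieRing L] [LieAlgebra K L]
    {W : Type*} [AddCommGroup W] [Module K W] [LieRingModule L W] [LieModule K L W]
    {I : Type*} (b : Module.Basis I K W) (J : Set I) (x y : L) : K :=
  (∑ᶠ p : I × I, if p.1 ∈ J ∧ p.2 ∉ J then
      b.repr ⁅x, b p.2⁆ p.1 * b.repr ⁅y, b p.1⁆ p.2 else 0)
  - (∑ᶠ p : I × I, if p.1 ∉ J ∧ p.2 ∈ J then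
      b.repr ⁅x, b p.2⁆ p.1 * b.repr ⁅y, b p.1⁆ p.2 else 0)

section Aux

set_option linter.unusedSectionVars false

open scoped Classical

variable {K : Type*} [Field K] {L : Type*} [LieRing L] [LieAlgebra K L]
    {W : Type*} [AddCommGroup W] [Module K W] [LieRingModule L W] [LieModule K L W]
    {I : Type*} (b : Module.Basis I K W) (J : Set I)

/-- Matrix coefficients: `fm b x β α = x_α^β`, the `α`-coefficient of `x` applied to `w_β`. -/
noncomputable def fm (x : L) (β : I) : I →₀ K := b.repr ⁅x, b β⁆

lemma repr_lie_apply (y : L) (v : W) (β : I) :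
    b.repr ⁅y, v⁆ β = (b.repr v).sum fun γ t => t * fm b y γ β := by
  have hv : (⁅y, v⁆ : W) = (b.repr v).sum fun γ t => t • ⁅y, b γ⁆ := by
    conv_lhs => rw [← b.linearCombination_repr v, Finsupp.linearCombination_apply]
    show LieModule.toEnd K L W y _ = _
    rw [map_finsuppSum]
    simp [LieModule.toEnd_apply_apply]
  rw [hv, map_finsuppSum, Finsupp.sum_apply]
  exact Finsupp.sum_congr fun γ _ => by simp [fm, Finsupp.smul_apply, smul_eq_mul]

lemma fm_lie (y z : L) (β α : I) :
    fm b ⁅y, z⁆ β α = (fm b z β).sum (fun γ t => t * fm b y γ α)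
      - (fm b y β).sum (fun γ t => t * fm b z γ α) := by
  show b.repr ⁅⁅y, z⁆, b β⁆ α = _
  rw [lie_lie, map_sub, Finsupp.sub_apply, repr_lie_apply, repr_lie_apply]
  rfl

/-- The triple summand `x_α^β y_β^γ z_γ^α` on the region `A × B × C`. -/
noncomputable def T3 (A B C : Set I) (x y z : L) : I × I × I → K :=
  fun q => if q.1 ∈ A ∧ q.2.1 ∈ B ∧ q.2.2 ∈ C then
    fm b x q.2.1 q.1 * fm b y q.2.2 q.2.1 * fm b z q.1 q.2.2 else 0

lemma T3_fin (hJ : ∀ x : L, {α ∈ J | ⁅x, b α⁆ ∉ Submodule.span K (⇑b '' J)}.Finite)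
    {A B C : Set I} (hA : A ⊆ J) (hC : ∀ γ ∈ C, γ ∉ J) (x y z : L) :
    (Function.support (T3 b A B C x y z)).Finite := by
  have hbig : (⋃ α ∈ {α ∈ J | ⁅z, b α⁆ ∉ Submodule.span K (⇑b '' J)},
      ⋃ γ ∈ ↑(fm b z α).support, ⋃ β ∈ ↑(fm b y γ).support,
        ({(α, β, γ)} : Set (I × I × I))).Finite :=
    (hJ z).biUnion fun α _ => ((fm b z α).support.finite_toSet).biUnion
      fun γ _ => ((fm b y γ).support.finite_toSet).biUnion fun β _ => Set.finite_singleton _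
  refine hbig.subset ?_
  rintro ⟨α, β, γ⟩ hq
  simp only [Function.mem_support, T3] at hq
  by_cases hcond : α ∈ A ∧ β ∈ B ∧ γ ∈ C
  swap
  · rw [if_neg hcond] at hq; exact absurd rfl hq
  rw [if_pos hcond] at hq
  have hy : fm b y γ β ≠ 0 := fun h => hq (by simp [h])
  have hz : fm b z α γ ≠ 0 := fun h => hq (by simp [h])
  simp only [Set.mem_iUnion, Set.mem_singleton_iff]
  refine ⟨α, ⟨hA hcond.1, fun hs => ?_⟩, γ, by simpa using hz, β, by simpa using hy, rfl⟩
  have hsupp := b.mem_span_image.mp hs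
  exact (hC γ hcond.2.2) (hsupp (by simpa [fm] using hz))

lemma T3_rot (A B C : Set I) (x y z : L) (q : I × I × I) :
    T3 b A B C x y z q = T3 b C A B z x y (q.2.2, q.1, q.2.1) := by
  simp only [T3]
  by_cases h : q.1 ∈ A ∧ q.2.1 ∈ B ∧ q.2.2 ∈ C
  · rw [if_pos h, if_pos ⟨h.2.2, h.1, h.2.1⟩]; ring
  · rw [if_neg h, if_neg (fun hc => h ⟨hc.2.1, hc.2.2, hc.1⟩)]

def rotEquiv (I : Type*) : I × I × I ≃ I × I × I where
  toFun q := (q.2.2, q.1, q.2.1)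
  invFun q := (q.2.1, q.2.2, q.1)
  left_inv := fun ⟨_, _, _⟩ => rfl
  right_inv := fun ⟨_, _, _⟩ => rfl

lemma T3_finsum_rot (A B C : Set I) (x y z : L) :
    ∑ᶠ q, T3 b A B C x y z q = ∑ᶠ q, T3 b C A B z x y q := by
  calc ∑ᶠ q, T3 b A B C x y z q
      = ∑ᶠ q, T3 b C A B z x y (rotEquiv I q) := finsum_congr (T3_rot b A B C x y z)
    _ = _ := finsum_comp_equiv (rotEquiv I) (f := T3 b C A B z x y)

lemma T3_fin_JcJ (hJ : ∀ x : L, {α ∈ J | ⁅x, b α⁆ ∉ Submodule.span K (⇑b '' J)}.Finite)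
    (x y z : L) : (Function.support (T3 b J Jᶜ J x y z)).Finite := by
  have h : Function.support (T3 b J Jᶜ J x y z)
      ⊆ (rotEquiv I) ⁻¹' Function.support (T3 b J J Jᶜ z x y) := by
    intro q hq
    simp only [Function.mem_support, Set.mem_preimage] at hq ⊢
    rw [T3_rot] at hq
    exact hq
  exact ((T3_fin b J hJ (B := J) (le_refl J) (fun γ hγ => hγ) z x y).preimage
    (rotEquiv I).injective.injOn).subset h

lemma T3_split3 (A B : Set I) (x y z : L) (q : I × I × I) :
    T3 b A B Set.univ x y z q = T3 b A B J x y z q + T3 b A B Jᶜ x y z q := by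
  simp only [T3, Set.mem_univ, Set.mem_compl_iff, and_true]
  by_cases h1 : q.1 ∈ A ∧ q.2.1 ∈ B
  · by_cases h2 : q.2.2 ∈ J
    · rw [if_pos h1, if_pos ⟨h1.1, h1.2, h2⟩, if_neg (fun hc => hc.2.2 h2), add_zero]
    · rw [if_pos h1, if_neg (fun hc => h2 hc.2.2), if_pos ⟨h1.1, h1.2, h2⟩, zero_add]
  · rw [if_neg h1, if_neg (fun hc => h1 ⟨hc.1, hc.2.1⟩),
      if_neg (fun hc => h1 ⟨hc.1, hc.2.1⟩), add_zero]

lemma T3_split2 (A C : Set I) (x y z : L) (q : I × I × I) :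
    T3 b A Set.univ C x y z q = T3 b A J C x y z q + T3 b A Jᶜ C x y z q := by
  simp only [T3, Set.mem_univ, Set.mem_compl_iff, true_and]
  by_cases h1 : q.1 ∈ A ∧ q.2.2 ∈ C
  · by_cases h2 : q.2.1 ∈ J
    · rw [if_pos h1, if_pos ⟨h1.1, h2, h1.2⟩, if_neg (fun hc => hc.2.1 h2), add_zero]
    · rw [if_pos h1, if_neg (fun hc => h2 hc.2.1), if_pos ⟨h1.1, h2, h1.2⟩, zero_add]
  · rw [if_neg h1, if_neg (fun hc => h1 ⟨hc.1, hc.2.2⟩),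
      if_neg (fun hc => h1 ⟨hc.1, hc.2.2⟩), add_zero]

/-- The pair summand of the first sum in `fockCocycle`. -/
noncomputable def F2 (x y : L) : I × I → K :=
  fun p => if p.1 ∈ J ∧ p.2 ∉ J then
    b.repr ⁅x, b p.2⁆ p.1 * b.repr ⁅y, b p.1⁆ p.2 else 0

lemma fockCocycle_eq (x y : L) :
    fockCocycle b J x y = ∑ᶠ p, F2 b J x y p - ∑ᶠ p, F2 b J y x p := by
  unfold fockCocycle F2
  congr 1
  calc (∑ᶠ p : I × I, if p.1 ∉ J ∧ p.2 ∈ J then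
          b.repr ⁅x, b p.2⁆ p.1 * b.repr ⁅y, b p.1⁆ p.2 else 0)
      = ∑ᶠ p : I × I, (fun r : I × I => if r.1 ∈ J ∧ r.2 ∉ J then
          b.repr ⁅y, b r.2⁆ r.1 * b.repr ⁅x, b r.1⁆ r.2 else 0) ((Equiv.prodComm I I) p) := by
        refine finsum_congr ?_
        rintro ⟨a, c⟩
        simp only [Equiv.prodComm_apply, Prod.swap]
        by_cases h : a ∉ J ∧ c ∈ J
        · rw [if_pos h]; exact ((if_pos (show c ∈ J ∧ a ∉ J from ⟨h.2, h.1⟩)).trans (mul_comm _ _)).symm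
        · rw [if_neg h]; exact (if_neg (show ¬(c ∈ J ∧ a ∉ J) from fun hc => h ⟨hc.2, hc.1⟩)).symm
    _ = ∑ᶠ r : I × I, (fun r : I × I => if r.1 ∈ J ∧ r.2 ∉ J then
          b.repr ⁅y, b r.2⁆ r.1 * b.repr ⁅x, b r.1⁆ r.2 else 0) r :=
        finsum_comp_equiv (Equiv.prodComm I I) (f := fun r : I × I =>
          if r.1 ∈ J ∧ r.2 ∉ J then b.repr ⁅y, b r.2⁆ r.1 * b.repr ⁅x, b r.1⁆ r.2 else 0)
    _ = _ := rfl

def assocEquiv (I : Type*) : (I × I) × I ≃ I × I × I :=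
  ⟨fun w => (w.1.1, w.1.2, w.2), fun q => ((q.1, q.2.1), q.2.2),
    fun ⟨⟨_, _⟩, _⟩ => rfl, fun ⟨_, _, _⟩ => rfl⟩

def assocFlipEquiv (I : Type*) : (I × I) × I ≃ I × I × I :=
  ⟨fun w => (w.1.1, w.2, w.1.2), fun q => ((q.1, q.2.2), q.2.1),
    fun ⟨⟨_, _⟩, _⟩ => rfl, fun ⟨_, _, _⟩ => rfl⟩

lemma support_sum_fin {f g h : I × I × I → K}
    (hfg : ∀ q, f q = g q + h q)
    (hg : (Function.support g).Finite) (hh : (Function.support h).Finite) :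
    (Function.support f).Finite := by
  refine (hg.union hh).subset ?_
  intro q hq
  rw [Function.mem_support, hfg q] at hq
  by_contra hn
  simp only [Set.mem_union, Function.mem_support, not_or, not_not] at hn
  rw [hn.1, hn.2, add_zero] at hq
  exact hq rfl

lemma marginal_fin {G : (I × I) × I → K} (hG : (Function.support G).Finite) :
    (Function.support fun p : I × I => ∑ᶠ γ, G (p, γ)).Finite := by
  refine (hG.image Prod.fst).subset ?_
  intro p hp
  rw [Function.mem_support] at hp
  have : ∃ γ, G (p, γ) ≠ 0 := by
    by_contra h
    push_neg at h
    exact hp (finsum_eq_zero_of_forall_eq_zero h)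
  obtain ⟨γ, hγ⟩ := this
  exact ⟨(p, γ), hγ, rfl⟩

lemma s_exp1 (hJ : ∀ x : L, {α ∈ J | ⁅x, b α⁆ ∉ Submodule.span K (⇑b '' J)}.Finite)
    (x y z : L) :
    ∑ᶠ p, F2 b J x ⁅y, z⁆ p =
      (∑ᶠ q, T3 b J Jᶜ J x y z q + ∑ᶠ q, T3 b J Jᶜ Jᶜ x y z q)
      - (∑ᶠ q, T3 b J Jᶜ J x z y q + ∑ᶠ q, T3 b J Jᶜ Jᶜ x z y q) := by
  have finJ1 := T3_fin_JcJ b J hJ x y z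
  have finC1 := T3_fin b J hJ (B := Jᶜ) (le_refl J) (fun γ hγ => hγ) x y z
  have finJ2 := T3_fin_JcJ b J hJ x z y
  have finC2 := T3_fin b J hJ (B := Jᶜ) (le_refl J) (fun γ hγ => hγ) x z y
  have fin1 : (Function.support (T3 b J Jᶜ Set.univ x y z)).Finite :=
    support_sum_fin (T3_split3 b J J Jᶜ x y z) finJ1 finC1
  have fin2 : (Function.support (T3 b J Jᶜ Set.univ x z y)).Finite :=
    support_sum_fin (T3_split3 b J J Jᶜ x z y) finJ2 finC2
  set G1 : (I × I) × I → K := fun w => T3 b J Jᶜ Set.univ x y z (w.1.1, w.1.2, w.2) with hG1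
  set G2 : (I × I) × I → K := fun w => T3 b J Jᶜ Set.univ x z y (w.1.1, w.1.2, w.2) with hG2
  have finG1 : (Function.support G1).Finite :=
    (fin1.preimage (assocEquiv I).injective.injOn).subset (fun w hw => hw)
  have finG2 : (Function.support G2).Finite :=
    (fin2.preimage (assocEquiv I).injective.injOn).subset (fun w hw => hw)
  have hpt : ∀ p : I × I, F2 b J x ⁅y, z⁆ p = (∑ᶠ γ, G1 (p, γ)) - (∑ᶠ γ, G2 (p, γ)) := by
    rintro ⟨α, β⟩
    by_cases h : α ∈ J ∧ β ∉ J
    · have e1 : ∀ γ, G1 ((α, β), γ) = fm b x β α * fm b y γ β * fm b z α γ := by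
        intro γ
        show T3 b J Jᶜ Set.univ x y z (α, β, γ) = _
        simp only [T3]
        rw [if_pos ⟨h.1, h.2, trivial⟩]
      have e2 : ∀ γ, G2 ((α, β), γ) = fm b x β α * fm b z γ β * fm b y α γ := by
        intro γ
        show T3 b J Jᶜ Set.univ x z y (α, β, γ) = _
        simp only [T3]
        rw [if_pos ⟨h.1, h.2, trivial⟩]
      have s1 : ∑ᶠ γ, G1 ((α, β), γ)
          = fm b x β α * (fm b z α).sum (fun γ t => t * fm b y γ β) := by
        rw [finsum_congr e1,
          finsum_eq_finset_sum_of_support_subset _ (s := (fm b z α).support) (fun γ hγ => by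
            simp only [Function.mem_support] at hγ
            simp only [Finset.coe_sort_coe, Finset.mem_coe, Finsupp.mem_support_iff]
            intro h0
            exact hγ (by rw [h0, mul_zero])),
          Finsupp.sum, Finset.mul_sum]
        exact Finset.sum_congr rfl fun γ _ => by ring
      have s2 : ∑ᶠ γ, G2 ((α, β), γ)
          = fm b x β α * (fm b y α).sum (fun γ t => t * fm b z γ β) := by
        rw [finsum_congr e2,
          finsum_eq_finset_sum_of_support_subset _ (s := (fm b y α).support) (fun γ hγ => by
            simp only [Function.mem_support] at hγ
            simp only [Finset.coe_sort_coe, Finset.mem_coe, Finsupp.mem_support_iff]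
            intro h0
            exact hγ (by rw [h0, mul_zero])),
          Finsupp.sum, Finset.mul_sum]
        exact Finset.sum_congr rfl fun γ _ => by ring
      show (if α ∈ J ∧ β ∉ J then b.repr ⁅x, b β⁆ α * b.repr ⁅⁅y, z⁆, b α⁆ β else 0) = _
      rw [if_pos h, s1, s2]
      show fm b x β α * fm b ⁅y, z⁆ α β = _
      rw [fm_lie, mul_sub]
    · have e1 : ∀ γ, G1 ((α, β), γ) = 0 := by
        intro γ
        show T3 b J Jᶜ Set.univ x y z (α, β, γ) = _
        simp only [T3]
        rw [if_neg (fun hc => h ⟨hc.1, hc.2.1⟩)]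
      have e2 : ∀ γ, G2 ((α, β), γ) = 0 := by
        intro γ
        show T3 b J Jᶜ Set.univ x z y (α, β, γ) = _
        simp only [T3]
        rw [if_neg (fun hc => h ⟨hc.1, hc.2.1⟩)]
      show (if α ∈ J ∧ β ∉ J then b.repr ⁅x, b β⁆ α * b.repr ⁅⁅y, z⁆, b α⁆ β else 0) = _
      rw [if_neg h, finsum_congr e1, finsum_congr e2, finsum_zero, sub_zero]
  rw [finsum_congr hpt, finsum_sub_distrib (marginal_fin finG1) (marginal_fin finG2)]
  congr 1
  · calc ∑ᶠ p, ∑ᶠ γ, G1 (p, γ) = ∑ᶠ w, G1 w := (finsum_curry _ finG1).symm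
      _ = ∑ᶠ q, T3 b J Jᶜ Set.univ x y z q :=
          finsum_comp_equiv (assocEquiv I) (f := T3 b J Jᶜ Set.univ x y z)
      _ = ∑ᶠ q, (T3 b J Jᶜ J x y z q + T3 b J Jᶜ Jᶜ x y z q) :=
          finsum_congr (T3_split3 b J J Jᶜ x y z)
      _ = _ := finsum_add_distrib finJ1 finC1
  · calc ∑ᶠ p, ∑ᶠ γ, G2 (p, γ) = ∑ᶠ w, G2 w := (finsum_curry _ finG2).symm
      _ = ∑ᶠ q, T3 b J Jᶜ Set.univ x z y q :=
          finsum_comp_equiv (assocEquiv I) (f := T3 b J Jᶜ Set.univ x z y)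
      _ = ∑ᶠ q, (T3 b J Jᶜ J x z y q + T3 b J Jᶜ Jᶜ x z y q) :=
          finsum_congr (T3_split3 b J J Jᶜ x z y)
      _ = _ := finsum_add_distrib finJ2 finC2

lemma s_exp2 (hJ : ∀ x : L, {α ∈ J | ⁅x, b α⁆ ∉ Submodule.span K (⇑b '' J)}.Finite)
    (x y z : L) :
    ∑ᶠ p, F2 b J ⁅y, z⁆ x p =
      (∑ᶠ q, T3 b J J Jᶜ y z x q + ∑ᶠ q, T3 b J Jᶜ Jᶜ y z x q)
      - (∑ᶠ q, T3 b J J Jᶜ z y x q + ∑ᶠ q, T3 b J Jᶜ Jᶜ z y x q) := by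
  have finJ1 : (Function.support (T3 b J J Jᶜ y z x)).Finite :=
    T3_fin b J hJ (B := J) (le_refl J) (fun γ hγ => hγ) y z x
  have finC1 : (Function.support (T3 b J Jᶜ Jᶜ y z x)).Finite :=
    T3_fin b J hJ (B := Jᶜ) (le_refl J) (fun γ hγ => hγ) y z x
  have finJ2 : (Function.support (T3 b J J Jᶜ z y x)).Finite :=
    T3_fin b J hJ (B := J) (le_refl J) (fun γ hγ => hγ) z y x
  have finC2 : (Function.support (T3 b J Jᶜ Jᶜ z y x)).Finite :=
    T3_fin b J hJ (B := Jᶜ) (le_refl J) (fun γ hγ => hγ) z y x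
  have fin1 : (Function.support (T3 b J Set.univ Jᶜ y z x)).Finite :=
    support_sum_fin (T3_split2 b J J Jᶜ y z x) finJ1 finC1
  have fin2 : (Function.support (T3 b J Set.univ Jᶜ z y x)).Finite :=
    support_sum_fin (T3_split2 b J J Jᶜ z y x) finJ2 finC2
  set G1 : (I × I) × I → K := fun w => T3 b J Set.univ Jᶜ y z x (w.1.1, w.2, w.1.2) with hG1
  set G2 : (I × I) × I → K := fun w => T3 b J Set.univ Jᶜ z y x (w.1.1, w.2, w.1.2) with hG2
  have finG1 : (Function.support G1).Finite :=
    (fin1.preimage (assocFlipEquiv I).injective.injOn).subset (fun w hw => hw)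
  have finG2 : (Function.support G2).Finite :=
    (fin2.preimage (assocFlipEquiv I).injective.injOn).subset (fun w hw => hw)
  have hpt : ∀ p : I × I, F2 b J ⁅y, z⁆ x p = (∑ᶠ γ, G1 (p, γ)) - (∑ᶠ γ, G2 (p, γ)) := by
    rintro ⟨α, β⟩
    by_cases h : α ∈ J ∧ β ∉ J
    · have e1 : ∀ γ, G1 ((α, β), γ) = fm b y γ α * fm b z β γ * fm b x α β := by
        intro γ
        show T3 b J Set.univ Jᶜ y z x (α, γ, β) = _
        simp only [T3]
        rw [if_pos ⟨h.1, trivial, h.2⟩]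
      have e2 : ∀ γ, G2 ((α, β), γ) = fm b z γ α * fm b y β γ * fm b x α β := by
        intro γ
        show T3 b J Set.univ Jᶜ z y x (α, γ, β) = _
        simp only [T3]
        rw [if_pos ⟨h.1, trivial, h.2⟩]
      have s1 : ∑ᶠ γ, G1 ((α, β), γ)
          = (fm b z β).sum (fun γ t => t * fm b y γ α) * fm b x α β := by
        rw [finsum_congr e1,
          finsum_eq_finset_sum_of_support_subset _ (s := (fm b z β).support) (fun γ hγ => by
            simp only [Function.mem_support] at hγ
            simp only [Finset.coe_sort_coe, Finset.mem_coe, Finsupp.mem_support_iff]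
            intro h0
            exact hγ (by rw [h0]; ring)),
          Finsupp.sum, Finset.sum_mul]
        exact Finset.sum_congr rfl fun γ _ => by ring
      have s2 : ∑ᶠ γ, G2 ((α, β), γ)
          = (fm b y β).sum (fun γ t => t * fm b z γ α) * fm b x α β := by
        rw [finsum_congr e2,
          finsum_eq_finset_sum_of_support_subset _ (s := (fm b y β).support) (fun γ hγ => by
            simp only [Function.mem_support] at hγ
            simp only [Finset.coe_sort_coe, Finset.mem_coe, Finsupp.mem_support_iff]
            intro h0
            exact hγ (by rw [h0]; ring)),
          Finsupp.sum, Finset.sum_mul]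
        exact Finset.sum_congr rfl fun γ _ => by ring
      show (if α ∈ J ∧ β ∉ J then b.repr ⁅⁅y, z⁆, b β⁆ α * b.repr ⁅x, b α⁆ β else 0) = _
      rw [if_pos h, s1, s2]
      show fm b ⁅y, z⁆ β α * fm b x α β = _
      rw [fm_lie, sub_mul]
    · have e1 : ∀ γ, G1 ((α, β), γ) = 0 := by
        intro γ
        show T3 b J Set.univ Jᶜ y z x (α, γ, β) = _
        simp only [T3]
        rw [if_neg (fun hc => h ⟨hc.1, hc.2.2⟩)]
      have e2 : ∀ γ, G2 ((α, β), γ) = 0 := by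
        intro γ
        show T3 b J Set.univ Jᶜ z y x (α, γ, β) = _
        simp only [T3]
        rw [if_neg (fun hc => h ⟨hc.1, hc.2.2⟩)]
      show (if α ∈ J ∧ β ∉ J then b.repr ⁅⁅y, z⁆, b β⁆ α * b.repr ⁅x, b α⁆ β else 0) = _
      rw [if_neg h, finsum_congr e1, finsum_congr e2, finsum_zero, sub_zero]
  rw [finsum_congr hpt, finsum_sub_distrib (marginal_fin finG1) (marginal_fin finG2)]
  congr 1
  · calc ∑ᶠ p, ∑ᶠ γ, G1 (p, γ) = ∑ᶠ w, G1 w := (finsum_curry _ finG1).symm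
      _ = ∑ᶠ q, T3 b J Set.univ Jᶜ y z x q :=
          finsum_comp_equiv (assocFlipEquiv I) (f := T3 b J Set.univ Jᶜ y z x)
      _ = ∑ᶠ q, (T3 b J J Jᶜ y z x q + T3 b J Jᶜ Jᶜ y z x q) :=
          finsum_congr (T3_split2 b J J Jᶜ y z x)
      _ = _ := finsum_add_distrib finJ1 finC1
  · calc ∑ᶠ p, ∑ᶠ γ, G2 (p, γ) = ∑ᶠ w, G2 w := (finsum_curry _ finG2).symm
      _ = ∑ᶠ q, T3 b J Set.univ Jᶜ z y x q :=
          finsum_comp_equiv (assocFlipEquiv I) (f := T3 b J Set.univ Jᶜ z y x)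
      _ = ∑ᶠ q, (T3 b J J Jᶜ z y x q + T3 b J Jᶜ Jᶜ z y x q) :=
          finsum_congr (T3_split2 b J J Jᶜ z y x)
      _ = _ := finsum_add_distrib finJ2 finC2

lemma cocycle_single (hJ : ∀ x : L, {α ∈ J | ⁅x, b α⁆ ∉ Submodule.span K (⇑b '' J)}.Finite)
    (x y z : L) :
    fockCocycle b J x ⁅y, z⁆ =
      ((∑ᶠ q, T3 b J J Jᶜ z x y q + ∑ᶠ q, T3 b J Jᶜ Jᶜ x y z q)
        - (∑ᶠ q, T3 b J J Jᶜ y x z q + ∑ᶠ q, T3 b J Jᶜ Jᶜ x z y q))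
      - ((∑ᶠ q, T3 b J J Jᶜ y z x q + ∑ᶠ q, T3 b J Jᶜ Jᶜ y z x q)
        - (∑ᶠ q, T3 b J J Jᶜ z y x q + ∑ᶠ q, T3 b J Jᶜ Jᶜ z y x q)) := by
  rw [fockCocycle_eq, s_exp1 b J hJ x y z, s_exp2 b J hJ x y z,
    T3_finsum_rot b (A := J) (B := Jᶜ) (C := J) x y z,
    T3_finsum_rot b (A := J) (B := Jᶜ) (C := J) x z y]

end Aux

/-- `c` is a Lie algebra 2-cocycle on `𝔤` with values in `K`:
`c(x,y) = −c(y,x)` and `c(x,[y,z]) + c(y,[z,x]) + c(z,[x,y]) = 0`. -/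
theorem stmt1 (K : Type*) [Field K] [CharZero K]
    (L : Type*) [LieRing L] [LieAlgebra K L]
    (W : Type*) [AddCommGroup W] [Module K W] [LieRingModule L W] [LieModule K L W]
    (I : Type*) (b : Module.Basis I K W) (J : Set I)
    (hJ : ∀ x : L, {α ∈ J | ⁅x, b α⁆ ∉ Submodule.span K (⇑b '' J)}.Finite) :
    (∀ x y : L, fockCocycle b J x y = - fockCocycle b J y x) ∧
    (∀ x y z : L,
      fockCocycle b J x ⁅y, z⁆ + fockCocycle b J y ⁅z, x⁆ + fockCocycle b J z ⁅x, y⁆ = 0) := by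
  constructor
  · intro x y
    rw [fockCocycle_eq, fockCocycle_eq]
    ring
  · intro x y z
    rw [cocycle_single b J hJ x y z, cocycle_single b J hJ y z x, cocycle_single b J hJ z x y]
    ring
end

section
/- On the K-vector space 𝔤 ⊕ K, the bracket ⁅(x,s),(y,t)⁆ := ([x,y], c(x,y)) is K-bilinear, alternating, and satisfies the Jacobi identity, so it makes 𝔤 ⊕ K a Lie algebra over K; moreover the projection π(x,s) = x is a surjective Lie algebra homomorphism whose kernel {0} ⊕ K is contained in the center. Thus (𝔤 ⊕ K, π) is a one-dimensional central extension of 𝔤. -/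
/-- The bracket `⁅(x,s),(y,t)⁆ = ([x,y], c(x,y))` on `𝔤 ⊕ K`. -/
noncomputable def extBracket {K : Type*} [Field K] {L : Type*} [LieRing L] [LieAlgebra K L]
    {W : Type*} [AddCommGroup W] [Module K W] [LieRingModule L W] [LieModule K L W]
    {I : Type*} (b : Module.Basis I K W) (J : Set I) (p q : L × K) : L × K :=
  (⁅p.1, q.1⁆, fockCocycle b J p.1 q.1)

namespace FockAux

open scoped Classical
set_option linter.unusedSectionVars false

variable {K : Type*} [Field K] {L : Type*} [LieRing L] [LieAlgebra K L]
  {W : Type*} [AddCommGroup W] [Module K W] [LieRingModule L W] [LieModule K L W]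
  {I : Type*} (b : Module.Basis I K W) (J : Set I)

/-- matrix entry of the action of `x` : row `α`, column `γ`. -/
noncomputable def Amat (x : L) (α γ : I) : K := b.repr ⁅x, b γ⁆ α

theorem Amat_add (x x' : L) (α γ : I) :
    Amat b (x + x') α γ = Amat b x α γ + Amat b x' α γ := by
  simp [Amat, add_lie]

theorem Amat_smul (a : K) (x : L) (α γ : I) :
    Amat b (a • x) α γ = a * Amat b x α γ := by
  simp [Amat, smul_lie]

theorem Amat_zero (α γ : I) : Amat b (0 : L) α γ = 0 := by simp [Amat, zero_lie]

theorem pin {x : L} {α γ : I} (hα : α ∈ J) (hγ : γ ∉ J) (h : b.repr ⁅x, b α⁆ γ ≠ 0) :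
    α ∈ {α ∈ J | ⁅x, b α⁆ ∉ Submodule.span K (⇑b '' J)} :=
  ⟨hα, fun hs => hγ ((Module.Basis.mem_span_image b).mp hs (Finsupp.mem_support_iff.mpr h))⟩

noncomputable def fpos (x y : L) (p : I × I) : K :=
  if p.1 ∈ J ∧ p.2 ∉ J then Amat b x p.1 p.2 * Amat b y p.2 p.1 else 0

noncomputable def fneg (x y : L) (p : I × I) : K :=
  if p.1 ∉ J ∧ p.2 ∈ J then Amat b x p.1 p.2 * Amat b y p.2 p.1 else 0

theorem fockCocycle_eq (x y : L) :
    fockCocycle b J x y = (∑ᶠ p, fpos b J x y p) - ∑ᶠ p, fneg b J x y p := rfl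

theorem fpos_support (x y : L)
    (hy : {α ∈ J | ⁅y, b α⁆ ∉ Submodule.span K (⇑b '' J)}.Finite) :
    (Function.support (fpos b J x y)).Finite := by
  apply Set.Finite.subset
    ((hy.toFinset.biUnion fun α => (b.repr ⁅y, b α⁆).support.image (Prod.mk α)).finite_toSet)
  rintro ⟨α, γ⟩ hp
  simp only [Function.mem_support, fpos] at hp
  split_ifs at hp with hc
  · obtain ⟨h1, h2⟩ := hc
    have hy0 : Amat b y γ α ≠ 0 := fun h => hp (by rw [h, mul_zero])
    simp only [Finset.coe_biUnion, Finset.mem_coe, Set.mem_iUnion]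
    exact ⟨α, hy.mem_toFinset.mpr (pin b J h1 h2 hy0),
      Finset.mem_image.mpr ⟨γ, Finsupp.mem_support_iff.mpr hy0, rfl⟩⟩
  · exact absurd rfl hp

theorem fneg_support (x y : L)
    (hx : {α ∈ J | ⁅x, b α⁆ ∉ Submodule.span K (⇑b '' J)}.Finite) :
    (Function.support (fneg b J x y)).Finite := by
  apply Set.Finite.subset
    ((hx.toFinset.biUnion fun α => (b.repr ⁅x, b α⁆).support.image (fun γ => (γ, α))).finite_toSet)
  rintro ⟨γ, α⟩ hp
  simp only [Function.mem_support, fneg] at hp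
  split_ifs at hp with hc
  · obtain ⟨h1, h2⟩ := hc
    have hx0 : Amat b x γ α ≠ 0 := fun h => hp (by rw [h, zero_mul])
    simp only [Finset.coe_biUnion, Finset.mem_coe, Set.mem_iUnion]
    exact ⟨α, hx.mem_toFinset.mpr (pin b J h2 h1 hx0),
      Finset.mem_image.mpr ⟨γ, Finsupp.mem_support_iff.mpr hx0, rfl⟩⟩
  · exact absurd rfl hp


variable (hJ : ∀ x : L, {α ∈ J | ⁅x, b α⁆ ∉ Submodule.span K (⇑b '' J)}.Finite)

include hJ

theorem c_add_left (x x' y : L) :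
    fockCocycle b J (x + x') y = fockCocycle b J x y + fockCocycle b J x' y := by
  have hp : (fun p => fpos b J (x + x') y p) = fun p => fpos b J x y p + fpos b J x' y p := by
    funext p
    simp only [fpos]
    split_ifs with h
    · rw [Amat_add]; ring
    · ring
  have hn : (fun p => fneg b J (x + x') y p) = fun p => fneg b J x y p + fneg b J x' y p := by
    funext p
    simp only [fneg]
    split_ifs with h
    · rw [Amat_add]; ring
    · ring
  rw [fockCocycle_eq, fockCocycle_eq, fockCocycle_eq, hp, hn,
    finsum_add_distrib (fpos_support b J x y (hJ y)) (fpos_support b J x' y (hJ y)),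
    finsum_add_distrib (fneg_support b J x y (hJ x)) (fneg_support b J x' y (hJ x'))]
  ring

theorem c_add_right (x y y' : L) :
    fockCocycle b J x (y + y') = fockCocycle b J x y + fockCocycle b J x y' := by
  have hp : (fun p => fpos b J x (y + y') p) = fun p => fpos b J x y p + fpos b J x y' p := by
    funext p
    simp only [fpos]
    split_ifs with h
    · rw [Amat_add]; ring
    · ring
  have hn : (fun p => fneg b J x (y + y') p) = fun p => fneg b J x y p + fneg b J x y' p := by
    funext p
    simp only [fneg]
    split_ifs with h
    · rw [Amat_add]; ring
    · ring
  rw [fockCocycle_eq, fockCocycle_eq, fockCocycle_eq, hp, hn,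
    finsum_add_distrib (fpos_support b J x y (hJ y)) (fpos_support b J x y' (hJ y')),
    finsum_add_distrib (fneg_support b J x y (hJ x)) (fneg_support b J x y' (hJ x))]
  ring

theorem c_smul_left (a : K) (x y : L) :
    fockCocycle b J (a • x) y = a * fockCocycle b J x y := by
  have hp : (fun p => fpos b J (a • x) y p) = fun p => a * fpos b J x y p := by
    funext p
    simp only [fpos]
    split_ifs with h
    · rw [Amat_smul]; ring
    · ring
  have hn : (fun p => fneg b J (a • x) y p) = fun p => a * fneg b J x y p := by
    funext p
    simp only [fneg]
    split_ifs with h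
    · rw [Amat_smul]; ring
    · ring
  rw [fockCocycle_eq, fockCocycle_eq, hp, hn,
    ← mul_finsum _ _,
    ← mul_finsum _ _]
  ring

theorem c_smul_right (a : K) (x y : L) :
    fockCocycle b J x (a • y) = a * fockCocycle b J x y := by
  have hp : (fun p => fpos b J x (a • y) p) = fun p => a * fpos b J x y p := by
    funext p
    simp only [fpos]
    split_ifs with h
    · rw [Amat_smul]; ring
    · ring
  have hn : (fun p => fneg b J x (a • y) p) = fun p => a * fneg b J x y p := by
    funext p
    simp only [fneg]
    split_ifs with h
    · rw [Amat_smul]; ring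
    · ring
  rw [fockCocycle_eq, fockCocycle_eq, hp, hn,
    ← mul_finsum _ _,
    ← mul_finsum _ _]
  ring

omit hJ

theorem fneg_swap (x y : L) (q : I × I) :
    fneg b J x y (q.2, q.1) = fpos b J y x q := by
  simp only [fneg, fpos]
  by_cases h1 : q.1 ∈ J <;> by_cases h2 : q.2 ∈ J <;> simp [h1, h2, mul_comm]

theorem finsum_fneg_eq (x y : L) : (∑ᶠ p, fneg b J x y p) = ∑ᶠ p, fpos b J y x p := by
  rw [← finsum_comp_equiv (Equiv.prodComm I I)]
  exact finsum_congr fun q => fneg_swap b J x y q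

theorem c_skew (x y : L) : fockCocycle b J x y = -fockCocycle b J y x := by
  rw [fockCocycle_eq, fockCocycle_eq, finsum_fneg_eq b J x y, ← finsum_fneg_eq b J y x]
  ring

theorem c_self (x : L) : fockCocycle b J x x = 0 := by
  rw [fockCocycle_eq, finsum_fneg_eq b J x x]
  ring

theorem c_zero_left (y : L) : fockCocycle b J 0 y = 0 := by
  rw [fockCocycle_eq]
  have hp : (fun p => fpos b J (0 : L) y p) = fun _ => (0 : K) := by
    funext p; simp [fpos, Amat_zero]
  have hn : (fun p => fneg b J (0 : L) y p) = fun _ => (0 : K) := by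
    funext p; simp [fneg, Amat_zero]
  rw [hp, hn, finsum_zero]
  ring

theorem c_zero_right (x : L) : fockCocycle b J x 0 = 0 := by
  rw [fockCocycle_eq]
  have hp : (fun p => fpos b J x (0 : L) p) = fun _ => (0 : K) := by
    funext p; simp [fpos, Amat_zero]
  have hn : (fun p => fneg b J x (0 : L) p) = fun _ => (0 : K) := by
    funext p; simp [fneg, Amat_zero]
  rw [hp, hn, finsum_zero]
  ring


theorem repr_lie_apply (v : L) (m : W) (γ : I) :
    b.repr ⁅v, m⁆ γ = ∑ β ∈ (b.repr m).support, b.repr m β * b.repr ⁅v, b β⁆ γ := by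
  set φ : W →ₗ[K] K :=
    (Finsupp.lapply γ) ∘ₗ (b.repr : W →ₗ[K] I →₀ K) ∘ₗ ((LieModule.toEnd K L W) v) with hφdef
  have hφ : ∀ m : W, φ m = b.repr ⁅v, m⁆ γ := fun m => rfl
  conv_lhs => rw [← hφ m, ← Module.Basis.linearCombination_repr b m]
  rw [Finsupp.linearCombination_apply, Finsupp.sum, map_sum]
  refine Finset.sum_congr rfl fun β _ => ?_
  rw [map_smul, smul_eq_mul, hφ]

theorem inner_support (v w : L) (γ α : I) :
    Function.support
      (fun β => Amat b v γ β * Amat b w β α - Amat b w γ β * Amat b v β α) ⊆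
      ↑((b.repr ⁅w, b α⁆).support ∪ (b.repr ⁅v, b α⁆).support) := by
  intro β hβ
  simp only [Function.mem_support] at hβ
  by_contra hβs
  simp only [Finset.coe_union, Set.mem_union, Finset.mem_coe, Finsupp.mem_support_iff,
    not_or, not_not] at hβs
  apply hβ
  have h1 : Amat b w β α = 0 := hβs.1
  have h2 : Amat b v β α = 0 := hβs.2
  rw [h1, h2]
  ring

theorem Amat_lie (v w : L) (γ α : I) :
    Amat b ⁅v, w⁆ γ α =
      ∑ᶠ β, (Amat b v γ β * Amat b w β α - Amat b w γ β * Amat b v β α) := by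
  rw [finsum_eq_finset_sum_of_support_subset _ (inner_support b v w γ α)]
  have hL : Amat b ⁅v, w⁆ γ α = b.repr ⁅v, ⁅w, b α⁆⁆ γ - b.repr ⁅w, ⁅v, b α⁆⁆ γ := by
    simp only [Amat, lie_lie, map_sub, Finsupp.sub_apply]
  rw [hL, repr_lie_apply b v ⁅w, b α⁆ γ, repr_lie_apply b w ⁅v, b α⁆ γ]
  rw [Finset.sum_sub_distrib]
  congr 1
  · rw [Finset.sum_subset (Finset.subset_union_left (s₂ := (b.repr ⁅v, b α⁆).support))]
    · refine Finset.sum_congr rfl fun β _ => ?_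
      simp only [Amat]; ring
    · intro β _ hβ
      have : Amat b w β α = 0 := Finsupp.notMem_support_iff.mp hβ
      simp only [Amat] at this ⊢
      rw [show b.repr ⁅w, b α⁆ β = 0 from this, zero_mul]
  · rw [Finset.sum_subset (Finset.subset_union_right (s₁ := (b.repr ⁅w, b α⁆).support))]
    · refine Finset.sum_congr rfl fun β _ => ?_
      simp only [Amat]; ring
    · intro β _ hβ
      have : Amat b v β α = 0 := Finsupp.notMem_support_iff.mp hβ
      simp only [Amat] at this ⊢
      rw [show b.repr ⁅v, b α⁆ β = 0 from this, zero_mul]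


noncomputable def trip (x y z : L) (t : (I × I) × I) : K :=
  Amat b x t.1.1 t.1.2 * Amat b y t.1.2 t.2 * Amat b z t.2 t.1.1

noncomputable def tpos (x y z : L) (t : (I × I) × I) : K :=
  if t.1.1 ∈ J ∧ t.1.2 ∉ J then trip b x y z t else 0

noncomputable def tneg (x y z : L) (t : (I × I) × I) : K :=
  if t.1.1 ∉ J ∧ t.1.2 ∈ J then trip b x y z t else 0

noncomputable def tw (x y z : L) (t : (I × I) × I) : K :=
  ((if t.1.1 ∈ J then (1 : K) else 0) - (if t.1.2 ∈ J then (1 : K) else 0)) * trip b x y z t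

theorem tw_eq (x y z : L) (t : (I × I) × I) :
    tw b J x y z t = tpos b J x y z t - tneg b J x y z t := by
  simp only [tw, tpos, tneg]
  by_cases h1 : t.1.1 ∈ J <;> by_cases h2 : t.1.2 ∈ J <;> simp [h1, h2] <;> ring

theorem tpos_support (x y z : L)
    (hy : {α ∈ J | ⁅y, b α⁆ ∉ Submodule.span K (⇑b '' J)}.Finite)
    (hz : {α ∈ J | ⁅z, b α⁆ ∉ Submodule.span K (⇑b '' J)}.Finite) :
    (Function.support (tpos b J x y z)).Finite := by
  set D1 : Finset ((I × I) × I) := hy.toFinset.biUnion fun β =>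
    (b.repr ⁅y, b β⁆).support.biUnion fun γ =>
      (b.repr ⁅x, b γ⁆).support.image fun α => ((α, γ), β)
  set D2 : Finset ((I × I) × I) := hz.toFinset.biUnion fun α =>
    (b.repr ⁅z, b α⁆).support.biUnion fun β =>
      (b.repr ⁅y, b β⁆).support.image fun γ => ((α, γ), β)
  apply Set.Finite.subset (D1 ∪ D2).finite_toSet
  rintro ⟨⟨α, γ⟩, β⟩ ht
  simp only [Function.mem_support, tpos] at ht
  split_ifs at ht with hc
  · obtain ⟨hα, hγ⟩ := hc
    have h1 : Amat b x α γ ≠ 0 := fun h => ht (by simp [trip, h])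
    have h2 : Amat b y γ β ≠ 0 := fun h => ht (by simp [trip, h])
    have h3 : Amat b z β α ≠ 0 := fun h => ht (by simp [trip, h])
    rw [Finset.coe_union]
    by_cases hβ : β ∈ J
    · left
      refine Finset.mem_coe.mpr (Finset.mem_biUnion.mpr
        ⟨β, hy.mem_toFinset.mpr (pin b J hβ hγ h2), Finset.mem_biUnion.mpr
          ⟨γ, Finsupp.mem_support_iff.mpr h2, Finset.mem_image.mpr
            ⟨α, Finsupp.mem_support_iff.mpr h1, rfl⟩⟩⟩)
    · right
      refine Finset.mem_coe.mpr (Finset.mem_biUnion.mpr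
        ⟨α, hz.mem_toFinset.mpr (pin b J hα hβ h3), Finset.mem_biUnion.mpr
          ⟨β, Finsupp.mem_support_iff.mpr h3, Finset.mem_image.mpr
            ⟨γ, Finsupp.mem_support_iff.mpr h2, rfl⟩⟩⟩)
  · exact absurd rfl ht

theorem tneg_support (x y z : L)
    (hx : {α ∈ J | ⁅x, b α⁆ ∉ Submodule.span K (⇑b '' J)}.Finite) :
    (Function.support (tneg b J x y z)).Finite := by
  set D : Finset ((I × I) × I) := hx.toFinset.biUnion fun γ =>
    (b.repr ⁅x, b γ⁆).support.biUnion fun α =>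
      (b.repr ⁅z, b α⁆).support.image fun β => ((α, γ), β)
  apply Set.Finite.subset D.finite_toSet
  rintro ⟨⟨α, γ⟩, β⟩ ht
  simp only [Function.mem_support, tneg] at ht
  split_ifs at ht with hc
  · obtain ⟨hα, hγ⟩ := hc
    have h1 : Amat b x α γ ≠ 0 := fun h => ht (by simp [trip, h])
    have h3 : Amat b z β α ≠ 0 := fun h => ht (by simp [trip, h])
    refine Finset.mem_coe.mpr (Finset.mem_biUnion.mpr
      ⟨γ, hx.mem_toFinset.mpr (pin b J hγ hα h1), Finset.mem_biUnion.mpr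
        ⟨α, Finsupp.mem_support_iff.mpr h1, Finset.mem_image.mpr
          ⟨β, Finsupp.mem_support_iff.mpr h3, rfl⟩⟩⟩)
  · exact absurd rfl ht

theorem tw_support (x y z : L)
    (hx : {α ∈ J | ⁅x, b α⁆ ∉ Submodule.span K (⇑b '' J)}.Finite)
    (hy : {α ∈ J | ⁅y, b α⁆ ∉ Submodule.span K (⇑b '' J)}.Finite)
    (hz : {α ∈ J | ⁅z, b α⁆ ∉ Submodule.span K (⇑b '' J)}.Finite) :
    (Function.support (tw b J x y z)).Finite := by
  apply Set.Finite.subset ((tpos_support b J x y z hy hz).union (tneg_support b J x y z hx))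
  intro t ht
  simp only [Function.mem_support, tw_eq] at ht
  by_contra h
  simp only [Set.mem_union, Function.mem_support, not_or, not_not] at h
  rw [h.1, h.2, sub_zero] at ht
  exact ht rfl

noncomputable def Tsum (x y z : L) : K := ∑ᶠ t, tw b J x y z t

include hJ

theorem Tsum_eq (x y z : L) :
    Tsum b J x y z = (∑ᶠ t, tpos b J x y z t) - ∑ᶠ t, tneg b J x y z t := by
  rw [Tsum, finsum_congr (tw_eq b J x y z),
    finsum_sub_distrib (tpos_support b J x y z (hJ y) (hJ z)) (tneg_support b J x y z (hJ x))]

omit hJ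

def cycEquiv : ((I × I) × I) ≃ ((I × I) × I) :=
  ⟨fun t => ((t.1.2, t.2), t.1.1), fun t => ((t.2, t.1.1), t.1.2), fun _ => rfl, fun _ => rfl⟩

include hJ

theorem Tsum_cyc (x y z : L) :
    Tsum b J x y z + Tsum b J y z x + Tsum b J z x y = 0 := by
  have e2 : Tsum b J y z x = ∑ᶠ t, tw b J y z x (cycEquiv t) := by
    rw [Tsum, ← finsum_comp_equiv (cycEquiv (I := I))]
  have e3 : Tsum b J z x y = ∑ᶠ t, tw b J z x y (cycEquiv (cycEquiv t)) := by
    rw [Tsum, ← finsum_comp_equiv (cycEquiv (I := I)), ← finsum_comp_equiv (cycEquiv (I := I))]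
  have fin2 : (Function.support fun t => tw b J y z x (cycEquiv t)).Finite := by
    have := (tw_support b J y z x (hJ y) (hJ z) (hJ x)).preimage
      ((cycEquiv (I := I)).injective.injOn)
    exact this.subset (fun t ht => ht)
  have fin3 : (Function.support fun t => tw b J z x y (cycEquiv (cycEquiv t))).Finite := by
    have := (tw_support b J z x y (hJ z) (hJ x) (hJ y)).preimage
      (((cycEquiv (I := I)).trans (cycEquiv (I := I))).injective.injOn)
    exact this.subset (fun t ht => ht)
  have finA : (Function.support fun t => tw b J x y z t + tw b J y z x (cycEquiv t)).Finite :=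
    ((tw_support b J x y z (hJ x) (hJ y) (hJ z)).union fin2).subset
      (Function.support_add _ _)
  rw [e2, e3, Tsum,
    ← finsum_add_distrib (tw_support b J x y z (hJ x) (hJ y) (hJ z)) fin2,
    ← finsum_add_distrib finA fin3]
  have hz0 : (fun t : (I × I) × I => tw b J x y z t + tw b J y z x (cycEquiv t)
      + tw b J z x y (cycEquiv (cycEquiv t))) = fun _ => (0 : K) := by
    funext t
    simp only [tw, trip, cycEquiv, Equiv.coe_fn_mk]
    by_cases h1 : t.1.1 ∈ J <;> by_cases h2 : t.1.2 ∈ J <;> by_cases h3 : t.2 ∈ J <;>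
      simp only [h1, h2, h3, ↓reduceIte, not_false_eq_true] <;> ring
  rw [hz0, finsum_zero]


omit hJ

theorem fpos_lie (u v w : L) (p : I × I) :
    fpos b J u ⁅v, w⁆ p = ∑ᶠ β, (tpos b J u v w (p, β) - tpos b J u w v (p, β)) := by
  simp only [fpos]
  split_ifs with hc
  · rw [Amat_lie b v w p.2 p.1,
      mul_finsum _ _]
    refine finsum_congr fun β => ?_
    simp only [tpos, trip, if_pos hc]
    ring
  · symm
    have h0 : (fun β => tpos b J u v w (p, β) - tpos b J u w v (p, β)) = fun _ => (0 : K) := by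
      funext β; simp only [tpos, if_neg hc]; ring
    rw [h0, finsum_zero]

theorem fneg_lie (u v w : L) (p : I × I) :
    fneg b J u ⁅v, w⁆ p = ∑ᶠ β, (tneg b J u v w (p, β) - tneg b J u w v (p, β)) := by
  simp only [fneg]
  split_ifs with hc
  · rw [Amat_lie b v w p.2 p.1,
      mul_finsum _ _]
    refine finsum_congr fun β => ?_
    simp only [tneg, trip, if_pos hc]
    ring
  · symm
    have h0 : (fun β => tneg b J u v w (p, β) - tneg b J u w v (p, β)) = fun _ => (0 : K) := by
      funext β; simp only [tneg, if_neg hc]; ring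
    rw [h0, finsum_zero]

include hJ

theorem finsum_fpos_lie (u v w : L) :
    (∑ᶠ p, fpos b J u ⁅v, w⁆ p) = (∑ᶠ t, tpos b J u v w t) - ∑ᶠ t, tpos b J u w v t := by
  have hfin : (Function.support fun t : (I × I) × I =>
      tpos b J u v w t - tpos b J u w v t).Finite :=
    ((tpos_support b J u v w (hJ v) (hJ w)).union (tpos_support b J u w v (hJ w) (hJ v))).subset
      (Function.support_sub _ _)
  rw [finsum_congr (fpos_lie b J u v w), ← finsum_curry _ hfin,
    finsum_sub_distrib (tpos_support b J u v w (hJ v) (hJ w))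
      (tpos_support b J u w v (hJ w) (hJ v))]

theorem finsum_fneg_lie (u v w : L) :
    (∑ᶠ p, fneg b J u ⁅v, w⁆ p) = (∑ᶠ t, tneg b J u v w t) - ∑ᶠ t, tneg b J u w v t := by
  have hfin : (Function.support fun t : (I × I) × I =>
      tneg b J u v w t - tneg b J u w v t).Finite :=
    ((tneg_support b J u v w (hJ u)).union (tneg_support b J u w v (hJ u))).subset
      (Function.support_sub _ _)
  rw [finsum_congr (fneg_lie b J u v w), ← finsum_curry _ hfin,
    finsum_sub_distrib (tneg_support b J u v w (hJ u)) (tneg_support b J u w v (hJ u))]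

theorem cocycle_lie (u v w : L) :
    fockCocycle b J u ⁅v, w⁆ = Tsum b J u v w - Tsum b J u w v := by
  rw [fockCocycle_eq, finsum_fpos_lie b J hJ u v w, finsum_fneg_lie b J hJ u v w,
    Tsum_eq b J hJ u v w, Tsum_eq b J hJ u w v]
  ring

theorem c_jacobi (x y z : L) :
    fockCocycle b J x ⁅y, z⁆ + fockCocycle b J y ⁅z, x⁆ + fockCocycle b J z ⁅x, y⁆ = 0 := by
  rw [cocycle_lie b J hJ x y z, cocycle_lie b J hJ y z x, cocycle_lie b J hJ z x y]
  have h1 := Tsum_cyc b J hJ x y z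
  have h2 := Tsum_cyc b J hJ x z y
  linear_combination h1 - h2

end FockAux

/-- the bracket `⁅(x,s),(y,t)⁆ := ([x,y], c(x,y))` on `𝔤 ⊕ K` is
`K`-bilinear, alternating, and satisfies the Jacobi identity, so it makes `𝔤 ⊕ K`
a Lie algebra over `K`; the projection onto the first factor is a surjective Lie
algebra homomorphism whose kernel `{0} ⊕ K` is contained in the center. -/
theorem stmt2 (K : Type*) [Field K] [CharZero K]
    (L : Type*) [LieRing L] [LieAlgebra K L]
    (W : Type*) [AddCommGroup W] [Module K W] [LieRingModule L W] [LieModule K L W]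
    (I : Type*) (b : Module.Basis I K W) (J : Set I)
    (hJ : ∀ x : L, {α ∈ J | ⁅x, b α⁆ ∉ Submodule.span K (⇑b '' J)}.Finite) :
    (∀ p q r : L × K, extBracket b J (p + q) r = extBracket b J p r + extBracket b J q r) ∧
    (∀ p q r : L × K, extBracket b J p (q + r) = extBracket b J p q + extBracket b J p r) ∧
    (∀ (a : K) (p q : L × K), extBracket b J (a • p) q = a • extBracket b J p q) ∧
    (∀ (a : K) (p q : L × K), extBracket b J p (a • q) = a • extBracket b J p q) ∧
    (∀ p : L × K, extBracket b J p p = 0) ∧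
    (∀ p q r : L × K,
      extBracket b J p (extBracket b J q r) + extBracket b J q (extBracket b J r p)
        + extBracket b J r (extBracket b J p q) = 0) ∧
    Function.Surjective (Prod.fst : L × K → L) ∧
    (∀ p q : L × K, (extBracket b J p q).1 = ⁅p.1, q.1⁆) ∧
    (∀ (k : K) (p : L × K),
      extBracket b J (0, k) p = 0 ∧ extBracket b J p (0, k) = 0) := by
  refine ⟨?_, ?_, ?_, ?_, ?_, ?_, ?_, ?_, ?_⟩
  · intro p q r
    simp only [extBracket, Prod.fst_add, Prod.mk_add_mk, add_lie,
      FockAux.c_add_left b J hJ]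
  · intro p q r
    simp only [extBracket, Prod.fst_add, Prod.mk_add_mk, lie_add,
      FockAux.c_add_right b J hJ]
  · intro a p q
    simp only [extBracket, Prod.smul_fst, Prod.smul_mk, smul_lie, smul_eq_mul,
      FockAux.c_smul_left b J hJ]
  · intro a p q
    simp only [extBracket, Prod.smul_fst, Prod.smul_mk, lie_smul, smul_eq_mul,
      FockAux.c_smul_right b J hJ]
  · intro p
    simp only [extBracket, FockAux.c_self b J, Prod.mk_eq_zero]
    exact ⟨lie_self p.1, trivial⟩
  · intro p q r
    simp only [extBracket, Prod.mk_add_mk, Prod.mk_eq_zero]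
    exact ⟨lie_jacobi p.1 q.1 r.1, FockAux.c_jacobi b J hJ p.1 q.1 r.1⟩
  · intro l
    exact ⟨(l, 0), rfl⟩
  · intro p q
    rfl
  · intro k p
    constructor
    · simp only [extBracket, Prod.mk_eq_zero]
      exact ⟨zero_lie p.1, FockAux.c_zero_left b J p.1⟩
    · simp only [extBracket, Prod.mk_eq_zero]
      exact ⟨lie_zero p.1, FockAux.c_zero_right b J p.1⟩
end

section
/- For all natural numbers m, ℓ, s: Σ_{b=0}^{m−1} (b−m)_ℓ · (b)_s = (−1)^ℓ · ℓ! · s! · binom(m+ℓ, m−s−1), an identity of integers. -/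
/-- The falling factorial `(a)_k = a(a−1)⋯(a−k+1)` for `a : ℤ`, with `(a)_0 = 1`. -/
def fallFact (a : ℤ) (k : ℕ) : ℤ := ∏ i ∈ Finset.range k, (a - i)

/-- `binom(n,b)` for `n : ℕ` and `b : ℤ`: the usual binomial coefficient,
equal to `0` when `b < 0` or `b > n`. -/
def natIntBinom (n : ℕ) (b : ℤ) : ℤ := if 0 ≤ b then (n.choose b.toNat : ℤ) else 0

lemma fallFact_natCast (n : ℕ) : ∀ k : ℕ, fallFact (n : ℤ) k = (n.descFactorial k : ℤ)
  | 0 => by simp [fallFact]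
  | k + 1 => by
    rw [fallFact, Finset.prod_range_succ, ← fallFact, fallFact_natCast n k,
      Nat.descFactorial_succ]
    rcases le_or_gt k n with h | h
    · push_cast [h]; ring
    · rw [Nat.descFactorial_of_lt h]
      simp

lemma fallFact_neg (n : ℕ) : ∀ k : ℕ, fallFact (-(n : ℤ)) k = (-1) ^ k * (n.ascFactorial k : ℤ)
  | 0 => by simp [fallFact]
  | k + 1 => by
    rw [fallFact, Finset.prod_range_succ, ← fallFact, fallFact_neg n k, Nat.ascFactorial_succ]
    push_cast
    ring

/-- Chu–Vandermonde style convolution. -/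
lemma g_eq (s : ℕ) : ∀ ℓ n : ℕ,
    ∑ i ∈ Finset.range (n + 1), i.choose s * (n - i + ℓ).choose ℓ
      = (n + ℓ + 1).choose (ℓ + s + 1)
  | 0, n => by
    simp only [Nat.choose_zero_right, Nat.mul_one, Nat.add_zero, Nat.zero_add]
    rw [← Nat.sum_Icc_choose n s]
    refine (Finset.sum_subset ?_ ?_).symm
    · intro x hx
      simp only [Finset.mem_Icc] at hx
      simp [Nat.lt_succ_iff, hx.2]
    · intro x hx hx'
      simp only [Finset.mem_Icc, Finset.mem_range, Nat.lt_succ_iff] at hx hx'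
      exact Nat.choose_eq_zero_of_lt (by omega)
  | L + 1, 0 => by
    cases s with
    | zero => simp
    | succ s => simp [Nat.choose_eq_zero_of_lt (by omega : L + 1 + 1 < L + 1 + (s + 1) + 1)]
  | L + 1, N + 1 => by
    have key : ∀ i ∈ Finset.range (N + 2),
        i.choose s * (N + 1 - i + (L + 1)).choose (L + 1)
          = i.choose s * (N + 1 - i + L).choose L
            + i.choose s * (N + 1 - i + L).choose (L + 1) := by
      intro i _
      rw [show N + 1 - i + (L + 1) = (N + 1 - i + L) + 1 by omega, Nat.choose_succ_succ,
        Nat.mul_add]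
    rw [Finset.sum_congr rfl key, Finset.sum_add_distrib]
    have h1 : ∑ i ∈ Finset.range (N + 2), i.choose s * (N + 1 - i + L).choose L
        = (N + 1 + L + 1).choose (L + s + 1) := g_eq s L (N + 1)
    have h2 : ∑ i ∈ Finset.range (N + 2), i.choose s * (N + 1 - i + L).choose (L + 1)
        = (N + (L + 1) + 1).choose (L + 1 + s + 1) := by
      rw [Finset.sum_range_succ, Nat.sub_self, Nat.zero_add,
        Nat.choose_eq_zero_of_lt (by omega : L < L + 1), Nat.mul_zero, Nat.add_zero]
      rw [← g_eq s (L + 1) N]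
      refine Finset.sum_congr rfl fun i hi => ?_
      simp only [Finset.mem_range, Nat.lt_succ_iff] at hi
      congr 2
      omega
    rw [h1, h2, show N + 1 + L + 1 = N + L + 2 by ring, show N + (L + 1) + 1 = N + L + 2 by ring,
      show L + 1 + s + 1 = L + s + 1 + 1 by ring, show N + 1 + (L + 1) + 1 = N + L + 2 + 1 by ring]
    exact (Nat.choose_succ_succ _ _).symm

lemma sum_Icc_int (f : ℤ → ℤ) (m : ℕ) :
    ∑ b ∈ Finset.Icc (0 : ℤ) ((m : ℤ) - 1), f b = ∑ i ∈ Finset.range m, f (i : ℤ) := by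
  have himg : Finset.Icc (0 : ℤ) ((m : ℤ) - 1)
      = Finset.image (fun i : ℕ => (i : ℤ)) (Finset.range m) := by
    ext x
    simp only [Finset.mem_Icc, Finset.mem_image, Finset.mem_range]
    constructor
    · rintro ⟨h0, h1⟩
      exact ⟨x.toNat, by omega, by omega⟩
    · rintro ⟨i, hi, rfl⟩
      omega
  rw [himg, Finset.sum_image]
  intro a _ b _ h
  simpa using h

/-- for all natural numbers `m, ℓ, s`:
`Σ_{b=0}^{m−1} (b−m)_ℓ (b)_s = (−1)^ℓ ℓ! s! binom(m+ℓ, m−s−1)`. -/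
theorem stmt9 (m ℓ s : ℕ) :
    ∑ b ∈ Finset.Icc (0 : ℤ) ((m : ℤ) - 1), fallFact (b - m) ℓ * fallFact b s
      = (-1) ^ ℓ * (ℓ.factorial : ℤ) * (s.factorial : ℤ)
        * natIntBinom (m + ℓ) ((m : ℤ) - s - 1) := by
  rw [sum_Icc_int (fun b => fallFact (b - m) ℓ * fallFact b s) m]
  rcases Nat.eq_zero_or_pos m with rfl | hm
  · rw [natIntBinom, if_neg (by push_cast; omega)]
    simp
  have hsum : ∑ i ∈ Finset.range m, fallFact ((i : ℤ) - m) ℓ * fallFact (i : ℤ) s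
      = (-1) ^ ℓ * (ℓ.factorial : ℤ) * (s.factorial : ℤ)
        * ((m - 1 + ℓ + 1).choose (ℓ + s + 1) : ℤ) := by
    have step : ∀ i ∈ Finset.range m, fallFact ((i : ℤ) - m) ℓ * fallFact (i : ℤ) s
        = (-1) ^ ℓ * (ℓ.factorial : ℤ) * (s.factorial : ℤ)
          * ((((m - 1 - i + ℓ).choose ℓ) * (i.choose s) : ℕ) : ℤ) := by
      intro i hi
      simp only [Finset.mem_range] at hi
      rw [show (i : ℤ) - m = -(((m - i : ℕ)) : ℤ) by push_cast [Nat.le_of_lt hi]; ring,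
        fallFact_neg, fallFact_natCast]
      rw [show m - i = (m - 1 - i) + 1 by omega,
        ← Nat.add_descFactorial_eq_ascFactorial (m - 1 - i) ℓ,
        Nat.descFactorial_eq_factorial_mul_choose,
        Nat.descFactorial_eq_factorial_mul_choose]
      push_cast
      ring
    rw [Finset.sum_congr rfl step, ← Finset.mul_sum, ← Nat.cast_sum]
    congr 2
    have := g_eq s ℓ (m - 1)
    rw [show m - 1 + 1 = m by omega] at this
    rw [← this]
    refine Finset.sum_congr rfl fun i hi => Nat.mul_comm _ _
  rw [hsum]
  congr 1
  rw [show m - 1 + ℓ + 1 = m + ℓ by omega, natIntBinom]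
  rcases le_or_gt (s + 1) m with h | h
  · rw [if_pos (by omega)]
    congr 1
    rw [show ((m : ℤ) - s - 1).toNat = m - s - 1 by omega]
    rw [← Nat.choose_symm (by omega : ℓ + s + 1 ≤ m + ℓ)]
    congr 1
    omega
  · rw [if_neg (by omega)]
    rw [Nat.choose_eq_zero_of_lt (by omega)]
    simp
end

section
/- For every integer r and all natural numbers ℓ, s: Σ_{b=0}^{s−r−1} (b+r−s)_ℓ · (b)_s − Σ_{b=s−r}^{−1} (b+r−s)_ℓ · (b)_s = (−1)^{s+1} · ℓ! · s! · binom(r, ℓ+s+1), an identity of integers (at most one of the two sums is nonempty). -/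
/-- The generalized binomial coefficient `binom(a,k) = (a)_k / k! ∈ ℤ`
for `a : ℤ` and `k : ℕ` (the division is exact). -/
def intBinom (a : ℤ) (k : ℕ) : ℤ := fallFact a k / (k.factorial : ℤ)

namespace Stmt13Aux

lemma fallFact_zero (a : ℤ) : fallFact a 0 = 1 := by simp [fallFact]

lemma fallFact_succ (a : ℤ) (k : ℕ) : fallFact a (k+1) = fallFact a k * (a - k) := by
  simp [fallFact, Finset.prod_range_succ]

lemma fallFact_succ' (a : ℤ) (k : ℕ) : fallFact a (k+1) = a * fallFact (a-1) k := by
  unfold fallFact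
  rw [Finset.prod_range_succ']
  have h : (∏ i ∈ Finset.range k, (a - ((i:ℕ)+1 : ℕ))) = ∏ i ∈ Finset.range k, (a - 1 - (i:ℕ)) :=
    Finset.prod_congr rfl (fun i _ => by push_cast; ring)
  rw [h]
  push_cast
  ring

lemma fallFact_diff (a : ℤ) (k : ℕ) :
    fallFact (a+1) (k+1) = fallFact a (k+1) + ((k:ℤ)+1) * fallFact a k := by
  have h1 := fallFact_succ' (a+1) k
  rw [add_sub_cancel_right] at h1
  rw [h1, fallFact_succ]
  ring

lemma fallFact_reflect' (a : ℤ) (k : ℕ) :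
    (-1:ℤ)^k * fallFact a k = fallFact ((k:ℤ) - 1 - a) k := by
  induction k with
  | zero => simp [fallFact]
  | succ k ih =>
    rw [show ((k+1:ℕ):ℤ) - 1 - a = (k:ℤ) - a by push_cast; ring,
      fallFact_succ' ((k:ℤ) - a) k, show (k:ℤ) - a - 1 = (k:ℤ) - 1 - a by ring,
      fallFact_succ, pow_succ, ← ih]
    ring

lemma fallFact_reflect (a : ℤ) (k : ℕ) :
    fallFact a k = (-1)^k * fallFact ((k:ℤ) - 1 - a) k := by
  rw [← fallFact_reflect', ← mul_assoc, ← pow_add, Even.neg_one_pow ⟨k, rfl⟩, one_mul]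

lemma fallFact_natCast (m k : ℕ) : fallFact (m:ℤ) k = (m.descFactorial k : ℤ) := by
  induction k with
  | zero => simp [fallFact]
  | succ k ih =>
    rw [fallFact_succ, ih, Nat.descFactorial_succ]
    rcases le_or_gt k m with h | h
    · rw [Nat.cast_mul, Nat.cast_sub h]
      ring
    · rw [Nat.descFactorial_eq_zero_iff_lt.2 h]
      simp

lemma factorial_dvd_fallFact (a : ℤ) (k : ℕ) : (k.factorial : ℤ) ∣ fallFact a k := by
  rcases le_or_gt 0 a with h | h
  · obtain ⟨m, rfl⟩ := Int.eq_ofNat_of_zero_le h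
    rw [fallFact_natCast]
    exact Int.natCast_dvd_natCast.2 (Nat.factorial_dvd_descFactorial m k)
  · rw [fallFact_reflect]
    have h2 : (0:ℤ) ≤ (k:ℤ) - 1 - a := by omega
    obtain ⟨m, hm⟩ := Int.eq_ofNat_of_zero_le h2
    rw [hm, fallFact_natCast]
    exact Dvd.dvd.mul_left (Int.natCast_dvd_natCast.2 (Nat.factorial_dvd_descFactorial m k)) _

/-- The signed sum `Σ_{b=0}^{n-1} g(b)` (minus `Σ_{b=n}^{-1} g(b)` when `n < 0`). -/
noncomputable def S (n : ℤ) (g : ℤ → ℤ) : ℤ :=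
  (∑ b ∈ Finset.Icc (0:ℤ) (n-1), g b) - (∑ b ∈ Finset.Icc n (-1:ℤ), g b)

lemma S_zero (g : ℤ → ℤ) : S 0 g = 0 := by
  have h : Finset.Icc (0:ℤ) (0-1) = ∅ := Finset.Icc_eq_empty (by norm_num)
  have h2 : Finset.Icc (0:ℤ) (-1) = ∅ := Finset.Icc_eq_empty (by norm_num)
  simp [S, h, h2]

lemma S_succ (n : ℤ) (g : ℤ → ℤ) : S (n+1) g = S n g + g n := by
  unfold S
  rcases le_or_gt 0 n with h | h
  · rw [Finset.Icc_eq_empty (show ¬ (n:ℤ) ≤ -1 by omega),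
        Finset.Icc_eq_empty (show ¬ (n+1:ℤ) ≤ -1 by omega)]
    have h1 : Finset.Icc (0:ℤ) (n+1-1) = insert n (Finset.Icc 0 (n-1)) := by
      ext x
      simp only [Finset.mem_Icc, Finset.mem_insert]
      omega
    rw [h1, Finset.sum_insert (by simp only [Finset.mem_Icc]; omega)]
    ring
  · rw [Finset.Icc_eq_empty (show ¬ (0:ℤ) ≤ n-1 by omega),
        Finset.Icc_eq_empty (show ¬ (0:ℤ) ≤ n+1-1 by omega)]
    have h1 : Finset.Icc n (-1:ℤ) = insert n (Finset.Icc (n+1) (-1)) := by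
      ext x
      simp only [Finset.mem_Icc, Finset.mem_insert]
      omega
    rw [h1, Finset.sum_insert (by simp only [Finset.mem_Icc]; omega)]
    ring

lemma S_eq (g : ℤ → ℤ) (P : ℤ → ℤ) (h0 : P 0 = 0)
    (hstep : ∀ n : ℤ, P (n+1) = P n + g n) : ∀ n : ℤ, S n g = P n := by
  intro n
  induction n using Int.induction_on with
  | zero => rw [S_zero, h0]
  | succ k ih => rw [S_succ, hstep, ih]
  | pred k ih =>
    have e1 := S_succ (-(k:ℤ) - 1) g
    have e2 := hstep (-(k:ℤ) - 1)
    rw [show (-(k:ℤ) - 1) + 1 = -(k:ℤ) by ring] at e1 e2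
    linarith [e1, e2, ih]

lemma S_mul (c : ℤ) (n : ℤ) (g : ℤ → ℤ) : S n (fun b => c * g b) = c * S n g := by
  simp [S, Finset.mul_sum, mul_sub]

lemma hockey (s : ℕ) (n : ℤ) :
    ((s:ℤ)+1) * S n (fun b => fallFact b s) = fallFact n (s+1) := by
  rw [← S_mul]
  exact S_eq (fun b => ((s:ℤ)+1) * fallFact b s) (fun m => fallFact m (s+1))
    (by show fallFact (0:ℤ) (s+1) = 0; rw [fallFact_succ']; simp)
    (fun m => by
      show fallFact (m+1) (s+1) = fallFact m (s+1) + ((s:ℤ)+1) * fallFact m s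
      exact fallFact_diff m s) n

lemma pointwise (r : ℤ) (ℓ s : ℕ) (x y : ℤ) (hxy : y = x + 1) :
    ((s:ℤ)+1) * (fallFact (x + r - s) (ℓ+1) * fallFact x s)
      + ((ℓ:ℤ)+1) * (fallFact (y + r - ((s+1:ℕ):ℤ)) ℓ * fallFact y (s+1))
      = fallFact (y + r - s) (ℓ+1) * fallFact y (s+1)
        - fallFact (x + r - s) (ℓ+1) * fallFact x (s+1) := by
  subst hxy
  have h1 : fallFact (x + 1 + r - s) (ℓ+1)
      = fallFact (x + r - s) (ℓ+1) + ((ℓ:ℤ)+1) * fallFact (x + r - s) ℓ := by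
    have := fallFact_diff (x + r - s) ℓ
    rw [show x + r - (s:ℤ) + 1 = x + 1 + r - s by ring] at this
    exact this
  have h2 := fallFact_diff x s
  rw [show x + 1 + r - ((s+1:ℕ):ℤ) = x + r - s by push_cast; ring, h1, h2]
  ring

lemma abel (r : ℤ) (ℓ s : ℕ) : ∀ n : ℤ,
    ((s:ℤ)+1) * S n (fun b => fallFact (b + r - s) (ℓ+1) * fallFact b s)
      + ((ℓ:ℤ)+1) * S (n+1) (fun b => fallFact (b + r - ((s+1:ℕ):ℤ)) ℓ * fallFact b (s+1))
      = fallFact (n + r - s) (ℓ+1) * fallFact n (s+1) := by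
  intro n
  induction n using Int.induction_on with
  | zero =>
    rw [S_zero, S_succ, S_zero]
    have h0 : fallFact (0:ℤ) (s+1) = 0 := by rw [fallFact_succ']; simp
    simp [h0]
  | succ k ih =>
    have e1 := S_succ (k:ℤ) (fun b => fallFact (b + r - s) (ℓ+1) * fallFact b s)
    have e2 := S_succ ((k:ℤ)+1) (fun b => fallFact (b + r - ((s+1:ℕ):ℤ)) ℓ * fallFact b (s+1))
    have hp := pointwise r ℓ s (k:ℤ) ((k:ℤ)+1) rfl
    linear_combination ih + hp + ((s:ℤ)+1) * e1 + ((ℓ:ℤ)+1) * e2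
  | pred k ih =>
    have e1 := S_succ (-(k:ℤ)-1) (fun b => fallFact (b + r - s) (ℓ+1) * fallFact b s)
    have e3 := S_succ (-(k:ℤ)) (fun b => fallFact (b + r - ((s+1:ℕ):ℤ)) ℓ * fallFact b (s+1))
    rw [show (-(k:ℤ)-1) + 1 = -(k:ℤ) by ring] at e1
    have hp := pointwise r ℓ s (-(k:ℤ)-1) (-(k:ℤ)) (by ring)
    rw [show (-(k:ℤ)-1) + 1 = -(k:ℤ) by ring]
    linear_combination ih - hp - ((s:ℤ)+1) * e1 - ((ℓ:ℤ)+1) * e3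

lemma key (ℓ : ℕ) : ∀ (r : ℤ) (s : ℕ),
    S ((s:ℤ) - r) (fun b => fallFact (b + r - s) ℓ * fallFact b s) * ((ℓ+s+1).factorial : ℤ)
      = (-1)^(s+1) * (ℓ.factorial : ℤ) * (s.factorial : ℤ) * fallFact r (ℓ+s+1) := by
  induction ℓ with
  | zero =>
    intro r s
    simp only [fallFact_zero, one_mul, Nat.zero_add, Nat.factorial_zero, Nat.cast_one]
    have hh := hockey s ((s:ℤ) - r)
    have hr : fallFact ((s:ℤ) - r) (s+1) = (-1)^(s+1) * fallFact r (s+1) := by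
      rw [fallFact_reflect ((s:ℤ) - r) (s+1),
        show ((s+1:ℕ):ℤ) - 1 - ((s:ℤ) - r) = r by push_cast; ring]
    have hfs : ((s+1).factorial : ℤ) = ((s:ℤ)+1) * (s.factorial : ℤ) := by
      rw [Nat.factorial_succ]; push_cast; ring
    rw [hfs]
    linear_combination (s.factorial : ℤ) * hh + (s.factorial : ℤ) * hr
  | succ ℓ ih =>
    intro r s
    have ih' := ih r (s+1)
    have habel := abel r ℓ s ((s:ℤ) - r)
    have hz : fallFact ((s:ℤ) - r + r - s) (ℓ+1) = 0 := by
      rw [show (s:ℤ) - r + r - s = 0 by ring, fallFact_succ']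
      simp
    rw [hz, zero_mul] at habel
    rw [show ((s+1:ℕ):ℤ) - r = (s:ℤ) - r + 1 by push_cast; ring] at ih'
    rw [show ℓ + 1 + s + 1 = ℓ + (s+1) + 1 by omega]
    rw [show ((-1:ℤ))^(s+1+1) = (-1)^(s+1) * (-1) from pow_succ _ _] at ih'
    have hcast1 : ((ℓ+1).factorial : ℤ) = ((ℓ:ℤ)+1) * (ℓ.factorial : ℤ) := by
      rw [Nat.factorial_succ]; push_cast; ring
    have hcast2 : ((s+1).factorial : ℤ) = ((s:ℤ)+1) * (s.factorial : ℤ) := by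
      rw [Nat.factorial_succ]; push_cast; ring
    rw [hcast2] at ih'
    rw [hcast1]
    apply mul_left_cancel₀ (show ((s:ℤ)+1) ≠ 0 by positivity)
    linear_combination ((ℓ+(s+1)+1).factorial : ℤ) * habel - ((ℓ:ℤ)+1) * ih'

end Stmt13Aux

open Stmt13Aux in
/-- for every integer `r` and all naturals `ℓ, s`:
`Σ_{b=0}^{s−r−1} (b+r−s)_ℓ (b)_s − Σ_{b=s−r}^{−1} (b+r−s)_ℓ (b)_s
  = (−1)^{s+1} ℓ! s! binom(r, ℓ+s+1)`. -/
theorem stmt13 (r : ℤ) (ℓ s : ℕ) :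
    (∑ b ∈ Finset.Icc (0 : ℤ) ((s : ℤ) - r - 1), fallFact (b + r - s) ℓ * fallFact b s)
      - (∑ b ∈ Finset.Icc ((s : ℤ) - r) (-1 : ℤ), fallFact (b + r - s) ℓ * fallFact b s)
      = (-1) ^ (s + 1) * (ℓ.factorial : ℤ) * (s.factorial : ℤ) * intBinom r (ℓ + s + 1) := by
  have hk := key ℓ r s
  have hdvd := factorial_dvd_fallFact r (ℓ+s+1)
  have hfac : (((ℓ+s+1).factorial : ℕ) : ℤ) ≠ 0 :=
    Int.natCast_ne_zero.2 (Nat.factorial_ne_zero _)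
  have hbin : intBinom r (ℓ+s+1) * (((ℓ+s+1).factorial : ℕ) : ℤ) = fallFact r (ℓ+s+1) := by
    unfold intBinom
    exact Int.ediv_mul_cancel hdvd
  apply mul_right_cancel₀ hfac
  unfold S at hk
  rw [hk]
  linear_combination ((-1:ℤ)^s * (ℓ.factorial : ℤ) * (s.factorial : ℤ)) * hbin
end

section
/- Let K be a field of characteristic 0. For all integers m, n: Σ over pairs (i,j) ∈ ℤ×ℤ with i ≥ 0, j < 0, i = m+j and j = n+i of the product i·j, minus the same sum over pairs with i < 0, j ≥ 0, i = m+j and j = n+i, equals (m − m³)/6 in K if m + n = 0 and equals 0 otherwise (both sums have finitely many nonzero terms). -/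
open Finset

lemma sum_id' (K : Type*) [Field K] [CharZero K] (N : ℕ) :
    ∑ i ∈ range N, (i : K) = N * (N - 1) / 2 := by
  induction N with
  | zero => simp
  | succ n ih => rw [sum_range_succ, ih]; push_cast; ring

lemma sum_sq' (K : Type*) [Field K] [CharZero K] (N : ℕ) :
    ∑ i ∈ range N, (i : K) ^ 2 = N * (N - 1) * (2 * N - 1) / 6 := by
  induction N with
  | zero => simp
  | succ n ih => rw [sum_range_succ, ih]; push_cast; ring

lemma key' (K : Type*) [Field K] [CharZero K] (k : ℕ) :
    ∑ j ∈ range k, ((j : K) ^ 2 - (k : K) * j) = ((k : K) - (k : K) ^ 3) / 6 := by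
  rw [Finset.sum_sub_distrib, sum_sq', ← Finset.mul_sum, sum_id']
  ring

lemma partA (K : Type*) [Field K] [CharZero K] (m n : ℤ) (h : m + n = 0) :
    (∑ᶠ p : ℤ × ℤ, if 0 ≤ p.1 ∧ p.2 < 0 ∧ p.1 = m + p.2 ∧ p.2 = n + p.1 then
        ((p.1 : K) * (p.2 : K)) else 0)
    = if 0 ≤ m then ((m : K) - (m : K) ^ 3) / 6 else 0 := by
  by_cases hm : 0 ≤ m
  · rw [if_pos hm]
    set f : ℤ × ℤ → K := fun p =>
      if 0 ≤ p.1 ∧ p.2 < 0 ∧ p.1 = m + p.2 ∧ p.2 = n + p.1 then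
        ((p.1 : K) * (p.2 : K)) else 0 with hf
    have hsub : Function.support f ⊆
        ((range m.toNat).image (fun j : ℕ => ((j : ℤ), (j : ℤ) - m)) : Finset (ℤ × ℤ)) := by
      intro p hp
      have : f p ≠ 0 := hp
      rw [hf] at this
      simp only at this
      split_ifs at this with hc
      · obtain ⟨h1, h2, h3, h4⟩ := hc
        simp only [coe_image, Set.mem_image, mem_coe, mem_range]
        refine ⟨p.1.toNat, ?_, ?_⟩
        · omega
        · have e1 : ((p.1.toNat : ℤ)) = p.1 := by omega
          have e2 : ((p.1.toNat : ℤ)) - m = p.2 := by omega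
          rw [e1, show p.1 - m = p.2 from by omega]
      · exact absurd rfl this
    rw [finsum_eq_sum_of_support_subset f hsub, Finset.sum_image (by
      intro a _ b _ hab
      have := congrArg Prod.fst hab
      simpa using this)]
    have : ∀ j ∈ range m.toNat, f ((j : ℤ), (j : ℤ) - m) = ((j : K) ^ 2 - (m.toNat : K) * j) := by
      intro j hj
      rw [mem_range] at hj
      rw [hf]
      have hc : 0 ≤ ((j : ℤ)) ∧ (j : ℤ) - m < 0 ∧ (j : ℤ) = m + ((j : ℤ) - m) ∧
          (j : ℤ) - m = n + (j : ℤ) := by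
        refine ⟨by positivity, by omega, by ring, by omega⟩
      simp only [if_pos hc]
      have hmt : ((m.toNat : ℤ) : K) = (m : K) := by
        norm_cast; omega
      push_cast
      rw [show ((m.toNat : ℕ) : K) = ((m.toNat : ℤ) : K) by push_cast; ring, hmt]
      ring
    rw [Finset.sum_congr rfl this, key']
    have hmt : ((m.toNat : ℤ) : K) = (m : K) := by norm_cast; omega
    rw [show ((m.toNat : ℕ) : K) = ((m.toNat : ℤ) : K) by push_cast; ring, hmt]
  · rw [if_neg hm]
    apply finsum_eq_zero_of_forall_eq_zero
    intro p
    split_ifs with hc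
    · exfalso; omega
    · rfl

/-- for all integers `m, n`, the sum over pairs `(i,j) ∈ ℤ×ℤ` with
`i ≥ 0`, `j < 0`, `i = m+j`, `j = n+i` of `i·j`, minus the same sum over pairs
with `i < 0`, `j ≥ 0`, `i = m+j`, `j = n+i`, equals `(m − m³)/6` in `K` if
`m + n = 0` and `0` otherwise (both sums have finitely many nonzero terms and
are taken as `finsum`s). -/
theorem stmt14 (K : Type*) [Field K] [CharZero K] (m n : ℤ) :
    (∑ᶠ p : ℤ × ℤ, if 0 ≤ p.1 ∧ p.2 < 0 ∧ p.1 = m + p.2 ∧ p.2 = n + p.1 then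
        ((p.1 : K) * (p.2 : K)) else 0)
    - (∑ᶠ p : ℤ × ℤ, if p.1 < 0 ∧ 0 ≤ p.2 ∧ p.1 = m + p.2 ∧ p.2 = n + p.1 then
        ((p.1 : K) * (p.2 : K)) else 0)
    = if m + n = 0 then ((m : K) - (m : K) ^ 3) / 6 else 0 := by
  by_cases h : m + n = 0
  · rw [if_pos h]
    have h2 : (∑ᶠ p : ℤ × ℤ, if p.1 < 0 ∧ 0 ≤ p.2 ∧ p.1 = m + p.2 ∧ p.2 = n + p.1 then
        ((p.1 : K) * (p.2 : K)) else 0)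
        = (∑ᶠ p : ℤ × ℤ, if 0 ≤ p.1 ∧ p.2 < 0 ∧ p.1 = n + p.2 ∧ p.2 = m + p.1 then
        ((p.1 : K) * (p.2 : K)) else 0) := by
      rw [← finsum_comp_equiv (Equiv.prodComm ℤ ℤ)]
      apply finsum_congr
      intro p
      simp only [Equiv.prodComm_apply, Prod.fst_swap, Prod.snd_swap]
      have hiff : (p.2 < 0 ∧ 0 ≤ p.1 ∧ p.2 = m + p.1 ∧ p.1 = n + p.2) ↔
          (0 ≤ p.1 ∧ p.2 < 0 ∧ p.1 = n + p.2 ∧ p.2 = m + p.1) := by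
        constructor <;> (rintro ⟨a, b, c, d⟩; exact ⟨by omega, by omega, by omega, by omega⟩)
      exact if_congr hiff (mul_comm _ _) rfl
    rw [h2, partA K m n h, partA K n m (by omega)]
    rcases lt_trichotomy m 0 with hm | hm | hm
    · rw [if_neg (by omega), if_pos (by omega)]
      have hn : (n : K) = -(m : K) := by
        have : n = -m := by omega
        rw [this]; push_cast; ring
      rw [hn]; ring
    · subst hm
      have hn : n = 0 := by omega
      subst hn
      norm_num
    · rw [if_pos (by omega), if_neg (by omega)]
      ring
  · rw [if_neg h]
    have z : ∀ (c : ℤ × ℤ → Prop) [DecidablePred c],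
        (∀ p, c p → m + n = 0) →
        (∑ᶠ p : ℤ × ℤ, if c p then ((p.1 : K) * (p.2 : K)) else 0) = 0 := by
      intro c _ hc
      apply finsum_eq_zero_of_forall_eq_zero
      intro p
      split_ifs with hp
      · exact absurd (hc p hp) h
      · rfl
    rw [z _ (fun p hp => by omega), z _ (fun p hp => by omega)]
    ring
end

section
/- Let K be a field of characteristic 0 and define c : ℤ × ℤ → K by c(m,n) = (m − m³)/6 if m + n = 0 and c(m,n) = 0 otherwise. Then for all integers m, n, p: c(m,n) = −c(n,m) and (m−n)·c(m+n, p) + (n−p)·c(n+p, m) + (p−m)·c(p+m, n) = 0. -/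
/-- The Virasoro 2-cocycle `c(m,n) = δ_{m+n,0}·(m−m³)/6` on the Witt algebra
(in the basis `{L_m}_{m∈ℤ}` with `[L_m, L_n] = (m−n) L_{m+n}`). -/
noncomputable def virasoroCocycle (K : Type*) [Field K] [CharZero K] (m n : ℤ) : K :=
  if m + n = 0 then ((m : K) - (m : K) ^ 3) / 6 else 0

/-- for all integers `m, n, p`: `c(m,n) = −c(n,m)` and
`(m−n)·c(m+n,p) + (n−p)·c(n+p,m) + (p−m)·c(p+m,n) = 0`, i.e. `c` is a
2-cocycle on the Witt algebra. -/
theorem stmt15 (K : Type*) [Field K] [CharZero K] (m n p : ℤ) :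
    virasoroCocycle K m n = - virasoroCocycle K n m ∧
    ((m : K) - n) * virasoroCocycle K (m + n) p
      + ((n : K) - p) * virasoroCocycle K (n + p) m
      + ((p : K) - m) * virasoroCocycle K (p + m) n = 0 := by
  constructor
  · unfold virasoroCocycle
    by_cases h : m + n = 0
    · have hn : n = -m := by omega
      subst hn
      simp only [h, if_pos, add_comm]
      push_cast
      ring
    · rw [if_neg h, if_neg (by omega), neg_zero]
  · unfold virasoroCocycle
    by_cases h : m + n + p = 0
    · have hp : p = -(m + n) := by omega
      subst hp
      rw [if_pos (by omega), if_pos (by omega), if_pos (by omega)]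
      push_cast
      ring
    · rw [if_neg (by omega), if_neg (by omega), if_neg (by omega)]
      ring
end

section
/- Let K be a field of characteristic 0 and I a finite index set. If U is a K-subspace of the polynomial ring K[X_α : α ∈ I] such that X_α·U ⊆ U and ∂p/∂X_α ∈ U for every p ∈ U and every α ∈ I, then U = {0} or U = K[X_α : α ∈ I]. -/
open MvPolynomial

lemma coeff_pderiv_aux {K : Type*} [CommRing K] {I : Type*}
    (α : I) (m : I →₀ ℕ) (p : MvPolynomial I K) :
    coeff m (pderiv α p) = coeff (m + Finsupp.single α 1) p * ((m α : K) + 1) := by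
  classical
  induction p using MvPolynomial.induction_on' with
  | monomial s a =>
    rw [pderiv_monomial, coeff_monomial, coeff_monomial]
    by_cases h : s = m + Finsupp.single α 1
    · subst h
      have h1 : Finsupp.single α 1 ≤ m + Finsupp.single α 1 := le_add_self
      rw [if_pos (by rw [add_tsub_cancel_right]), if_pos rfl]
      simp [mul_comm]
    · rw [if_neg h]
      by_cases h2 : s - Finsupp.single α 1 = m
      · rw [if_pos h2]
        have hs : s α = 0 := by
          by_contra hs
          apply h
          have : Finsupp.single α 1 ≤ s := by
            rw [Finsupp.single_le_iff]; omega
          rw [← h2, tsub_add_cancel_of_le this]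
        simp [hs]
      · rw [if_neg h2, zero_mul]
  | add p q hp hq =>
    simp [hp, hq, add_mul]

lemma sum_add_single {I : Type*} (α : I) (m : I →₀ ℕ) :
    ((m + Finsupp.single α 1).sum fun _ e => e) = (m.sum fun _ e => e) + 1 := by
  classical
  rw [Finsupp.sum_add_index' (fun _ => rfl) (fun _ _ _ => rfl),
    Finsupp.sum_single_index rfl]

/-- if `U` is a `K`-subspace of the polynomial ring
`K[X_α : α ∈ I]` (with `I` finite, `K` of characteristic 0) that is stable under
multiplication by every variable `X_α` and under every partial derivative
`∂/∂X_α`, then `U = {0}` or `U = K[X_α : α ∈ I]`. -/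
theorem stmt18 (K : Type*) [Field K] [CharZero K] (I : Type*) [Finite I]
    (U : Submodule K (MvPolynomial I K))
    (hX : ∀ (α : I) (p : MvPolynomial I K), p ∈ U → MvPolynomial.X α * p ∈ U)
    (hD : ∀ (α : I) (p : MvPolynomial I K), p ∈ U → MvPolynomial.pderiv α p ∈ U) :
    U = ⊥ ∨ U = ⊤ := by
  classical
  by_cases hbot : U = ⊥
  · exact Or.inl hbot
  right
  -- there is a nonzero element of U
  obtain ⟨p₀, hp₀U, hp₀⟩ : ∃ p, p ∈ U ∧ p ≠ 0 := by
    by_contra h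
    push_neg at h
    exact hbot (le_antisymm (fun x hx => by
      simp [Submodule.mem_bot, h x hx]) bot_le)
  -- key: 1 ∈ U
  have key : ∀ n (p : MvPolynomial I K), p.totalDegree = n → p ∈ U → p ≠ 0 →
      (1 : MvPolynomial I K) ∈ U := by
    intro n
    induction n using Nat.strong_induction_on with
    | _ n ih =>
      intro p hdeg hU hne
      rcases Nat.eq_zero_or_pos n with hn0 | hnpos
      · -- p is a nonzero constant
        subst hn0
        have hsub : p.support = {0} := by
          apply Finset.eq_singleton_iff_nonempty_unique_mem.mpr
          refine ⟨support_nonempty.mpr hne, fun m hm => ?_⟩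
          ext x
          exact (totalDegree_eq_zero_iff I p).mp hdeg m hm x
        obtain ⟨c, hcp⟩ : ∃ c, p = C c := ⟨coeff 0 p, by
          conv_lhs => rw [p.as_sum, hsub]
          rw [Finset.sum_singleton, C_apply]⟩
        have hc : c ≠ 0 := fun h => hne (hcp.trans (by simp [h]))
        have := U.smul_mem c⁻¹ hU
        rw [hcp] at this
        rwa [smul_eq_C_mul, ← C_mul, inv_mul_cancel₀ hc, C_1] at this
      · -- pick a top-degree monomial
        have hsupp : p.support.Nonempty := by
          exact support_nonempty.mpr hne
        obtain ⟨d, hd, hdeq⟩ := Finset.exists_mem_eq_sup _ hsupp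
          (fun s : I →₀ ℕ => s.sum fun _ e => e)
        have hdsum : (d.sum fun _ e => e) = n := by
          rw [← hdeg, totalDegree, hdeq]
        obtain ⟨α, hα⟩ : ∃ α, d α ≠ 0 := by
          by_contra h
          push_neg at h
          have hd0 : d = 0 := Finsupp.ext h
          rw [hd0] at hdsum
          simp at hdsum
          omega
        set q := pderiv α p with hq
        have hqU : q ∈ U := hD α p hU
        -- q is nonzero
        have hd1 : Finsupp.single α 1 ≤ d := by
          rw [Finsupp.single_le_iff]; omega
        have hcoeffq : coeff (d - Finsupp.single α 1) q ≠ 0 := by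
          rw [hq, coeff_pderiv_aux, tsub_add_cancel_of_le hd1]
          apply mul_ne_zero
          · rwa [← mem_support_iff]
          · exact Nat.cast_add_one_ne_zero _
        have hqne : q ≠ 0 := fun h => hcoeffq (by simp [h])
        -- q has smaller total degree
        have hqdeg : q.totalDegree < n := by
          rw [totalDegree]
          apply Finset.sup_lt_iff (by exact_mod_cast hnpos) |>.mpr
          intro m hm
          rw [mem_support_iff, hq, coeff_pderiv_aux] at hm
          have hm' : coeff (m + Finsupp.single α 1) p ≠ 0 :=
            fun h => hm (by rw [h, zero_mul])
          have hle : ((m + Finsupp.single α 1).sum fun _ e => e) ≤ n := by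
            rw [← hdeg]
            exact le_totalDegree (mem_support_iff.mpr hm')
          rw [sum_add_single] at hle
          omega
        exact ih q.totalDegree hqdeg q rfl hqU hqne
  have hone : (1 : MvPolynomial I K) ∈ U := key p₀.totalDegree p₀ rfl hp₀U hp₀
  rw [Submodule.eq_top_iff']
  intro p
  induction p using MvPolynomial.induction_on with
  | C a =>
    have := U.smul_mem a hone
    rwa [smul_eq_C_mul, mul_one] at this
  | add p q hp hq => exact U.add_mem hp hq
  | mul_X p α hp => rw [mul_comm]; exact hX α p hp
end

section
/- Let K be a field of characteristic 0 and W a finite-dimensional K-vector space. If U is a K-subspace of the exterior algebra Λ(W) such that w ∧ u ∈ U for every w ∈ W and u ∈ U, and ι_λ(u) ∈ U for every λ ∈ W* and u ∈ U (where ι_λ denotes left contraction/interior multiplication by the linear functional λ), then U = {0} or U = Λ(W). -/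
open ExteriorAlgebra

section Aux

variable {K : Type*} [Field K] {W : Type*} [AddCommGroup W] [Module K W]

lemma stmt19_contract_pow_zero (d : Module.Dual K W) {x : ExteriorAlgebra K W}
    (hx : x ∈ ⋀[K]^0 W) : CliffordAlgebra.contractLeft d x = 0 := by
  have hx' : x ∈ (LinearMap.range (ι K (M := W)) : Submodule K _) ^ 0 := hx
  rw [pow_zero, Submodule.mem_one] at hx'
  obtain ⟨c, rfl⟩ := hx'
  exact CliffordAlgebra.contractLeft_algebraMap (Q := (0 : QuadraticForm K W)) d c

lemma stmt19_contract_mem_pow (d : Module.Dual K W) {n : ℕ} {x : ExteriorAlgebra K W}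
    (hx : x ∈ ⋀[K]^n W) :
    CliffordAlgebra.contractLeft d x ∈ ⋀[K]^(n - 1) W := by
  induction hx using Submodule.pow_induction_on_left' with
  | algebraMap r =>
    rw [CliffordAlgebra.contractLeft_algebraMap]; exact Submodule.zero_mem _
  | add x y i hx hy ihx ihy =>
    rw [map_add]; exact Submodule.add_mem _ ihx ihy
  | mem_mul m hm i x hx ih =>
    obtain ⟨v, rfl⟩ := hm
    rw [CliffordAlgebra.contractLeft_ι_mul, Nat.succ_sub_one]
    refine Submodule.sub_mem _ (Submodule.smul_mem _ _ hx) ?_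
    cases i with
    | zero =>
      rw [stmt19_contract_pow_zero d hx, mul_zero]; exact Submodule.zero_mem _
    | succ i =>
      rw [Nat.succ_sub_one] at ih
      have := Submodule.mul_mem_mul (LinearMap.mem_range_self (ι K (M := W)) v) ih
      rw [← pow_one (LinearMap.range (ι K (M := W))), ← pow_add, add_comm 1 i] at this
      exact this

lemma stmt19_anticomm (a v : W) :
    ι K (M := W) a * ι K v = -(ι K v * ι K a) := by
  have := CliffordAlgebra.ι_mul_ι_add_swap (Q := (0 : QuadraticForm K W)) a v
  simp only [QuadraticMap.polar, QuadraticMap.zero_apply, sub_zero, sub_self, map_zero] at this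
  exact eq_neg_of_add_eq_zero_left this

lemma stmt19_euler {ιW : Type*} [Fintype ιW] (b : Module.Basis ιW K W) {n : ℕ}
    {x : ExteriorAlgebra K W} (hx : x ∈ ⋀[K]^n W) :
    ∑ i, ι K (b i) * CliffordAlgebra.contractLeft (b.coord i) x = n • x := by
  induction hx using Submodule.pow_induction_on_left' with
  | algebraMap r =>
    simp [CliffordAlgebra.contractLeft_algebraMap]
  | add x y i hx hy ihx ihy =>
    simp only [map_add, mul_add, Finset.sum_add_distrib, ihx, ihy, smul_add]
  | mem_mul m hm i x hx ih =>
    obtain ⟨v, rfl⟩ := hm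
    have step : ∀ j : ιW, ι K (M := W) (b j) *
        CliffordAlgebra.contractLeft (b.coord j) (ι K v * x) =
        b.coord j v • (ι K (b j) * x) +
          ι K v * (ι K (b j) * CliffordAlgebra.contractLeft (b.coord j) x) := by
      intro j
      rw [CliffordAlgebra.contractLeft_ι_mul, mul_sub, mul_smul_comm, ← mul_assoc,
        stmt19_anticomm (b j) v, neg_mul, mul_assoc, sub_neg_eq_add]
    rw [Finset.sum_congr rfl fun j _ => step j, Finset.sum_add_distrib,
      ← Finset.mul_sum, ih]
    have h1 : ∑ j, b.coord j v • (ι K (M := W) (b j) * x) = ι K v * x := by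
      simp_rw [← smul_mul_assoc, ← Finset.sum_mul, ← map_smul, ← map_sum,
        Module.Basis.coord_apply, Module.Basis.sum_repr]
    rw [h1, mul_smul_comm, succ_nsmul, add_comm]

end Aux

section Main

open scoped Classical

variable {K : Type*} [Field K] [CharZero K]
  {W : Type*} [AddCommGroup W] [Module K W] [FiniteDimensional K W]

lemma stmt19_exists_contract_ne {n : ℕ} (hn : n ≠ 0)
    {x : ExteriorAlgebra K W} (hx : x ∈ ⋀[K]^n W) (hx0 : x ≠ 0) :
    ∃ d : Module.Dual K W, CliffordAlgebra.contractLeft d x ≠ 0 := by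
  by_contra h
  push_neg at h
  have he := stmt19_euler (Module.finBasis K W) hx
  simp only [h, mul_zero, Finset.sum_const_zero] at he
  have h2 : (n : K) • x = 0 := by rw [Nat.cast_smul_eq_nsmul, ← he]
  rcases smul_eq_zero.mp h2 with h' | h'
  · exact hn (Nat.cast_eq_zero.mp h')
  · exact hx0 h'

local notation "ℳ" => fun i : ℕ => (⋀[K]^i W : Submodule K (ExteriorAlgebra K W))

lemma stmt19_decompose_contract (d : Module.Dual K W) (u : ExteriorAlgebra K W) (k : ℕ) :
    (DirectSum.decompose ℳ (CliffordAlgebra.contractLeft d u) k : ExteriorAlgebra K W) =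
      ∑ m ∈ (DirectSum.decompose ℳ u).support,
        (DirectSum.decompose ℳ (CliffordAlgebra.contractLeft d
          (DirectSum.decompose ℳ u m : ExteriorAlgebra K W)) k : ExteriorAlgebra K W) := by
  conv_lhs => rw [← DirectSum.sum_support_decompose ℳ u]
  rw [map_sum, DirectSum.decompose_sum, DFinsupp.finset_sum_apply,
    AddSubmonoidClass.coe_finset_sum]

end Main

section Main2

open scoped Classical

variable {K : Type*} [Field K] [CharZero K]
  {W : Type*} [AddCommGroup W] [Module K W] [FiniteDimensional K W]

local notation "ℳ" => fun i : ℕ => (⋀[K]^i W : Submodule K (ExteriorAlgebra K W))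

lemma stmt19_key (U : Submodule K (ExteriorAlgebra K W))
    (hC : ∀ (lam : Module.Dual K W) (u : ExteriorAlgebra K W),
      u ∈ U → CliffordAlgebra.contractLeft lam u ∈ U) :
    ∀ n : ℕ, ∀ u : ExteriorAlgebra K W, u ∈ U → u ≠ 0 →
      (∀ m : ℕ, n < m → (DirectSum.decompose ℳ u m : ExteriorAlgebra K W) = 0) →
      (1 : ExteriorAlgebra K W) ∈ U := by
  intro n
  induction n with
  | zero =>
    intro u hu hu0 hcomp
    have hsub : (DirectSum.decompose ℳ u).support ⊆ {0} := by
      intro i hi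
      rw [Finset.mem_singleton]
      by_contra hi0
      have : (DirectSum.decompose ℳ u i : ExteriorAlgebra K W) = 0 :=
        hcomp i (Nat.pos_of_ne_zero hi0)
      exact (DFinsupp.mem_support_iff.mp hi) (Subtype.ext this)
    have h0 : u = (DirectSum.decompose ℳ u 0 : ExteriorAlgebra K W) := by
      conv_lhs => rw [← DirectSum.sum_support_decompose ℳ u]
      have hzero : ∀ x ∈ ({0} : Finset ℕ), x ∉ (DirectSum.decompose ℳ u).support →
          ((DirectSum.decompose ℳ u x : ⋀[K]^x W) : ExteriorAlgebra K W) = 0 :=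
        fun x _ hx => by rw [DFinsupp.notMem_support_iff.mp hx]; rfl
      rw [Finset.sum_subset hsub hzero, Finset.sum_singleton]
    have hmem : u ∈ ⋀[K]^0 W := h0 ▸ (DirectSum.decompose ℳ u 0).2
    have hmem' : u ∈ (LinearMap.range (ι K (M := W)) : Submodule K _) ^ 0 := hmem
    rw [pow_zero, Submodule.mem_one] at hmem'
    obtain ⟨c, rfl⟩ := hmem'
    have hc : c ≠ 0 := by rintro rfl; simp at hu0
    have := U.smul_mem c⁻¹ hu
    rwa [Algebra.algebraMap_eq_smul_one, smul_smul, inv_mul_cancel₀ hc, one_smul] at this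
  | succ n ih =>
    intro u hu hu0 hcomp
    by_cases hn1 : (DirectSum.decompose ℳ u (n + 1) : ExteriorAlgebra K W) = 0
    · refine ih u hu hu0 fun m hm => ?_
      rcases eq_or_lt_of_le (Nat.succ_le_of_lt hm) with h | h
      · rw [← h]; exact hn1
      · exact hcomp m h
    · obtain ⟨d, hd⟩ := stmt19_exists_contract_ne (Nat.succ_ne_zero n)
        (DirectSum.decompose ℳ u (n + 1)).2 hn1
      set v := CliffordAlgebra.contractLeft d u with hv
      have hbound : ∀ m ∈ (DirectSum.decompose ℳ u).support, m ≤ n + 1 := by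
        intro m hm
        by_contra hgt
        exact (DFinsupp.mem_support_iff.mp hm)
          (Subtype.ext (hcomp m (Nat.lt_of_not_le hgt)))
      -- components of v
      have hcompv : ∀ k : ℕ, n < k → (DirectSum.decompose ℳ v k : ExteriorAlgebra K W) = 0 := by
        intro k hk
        rw [hv, stmt19_decompose_contract]
        refine Finset.sum_eq_zero fun m hm => ?_
        refine DirectSum.decompose_of_mem_ne ℳ
          (stmt19_contract_mem_pow d (DirectSum.decompose ℳ u m).2) ?_
        have := hbound m hm
        omega
      have hvn : (DirectSum.decompose ℳ v n : ExteriorAlgebra K W) =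
          CliffordAlgebra.contractLeft d (DirectSum.decompose ℳ u (n + 1) : ExteriorAlgebra K W) := by
        rw [hv, stmt19_decompose_contract]
        have hmemsup : n + 1 ∈ (DirectSum.decompose ℳ u).support :=
          DFinsupp.mem_support_iff.mpr fun h => hn1 (by rw [h]; rfl)
        rw [Finset.sum_eq_single_of_mem (n + 1) hmemsup ?_]
        · exact DirectSum.decompose_of_mem_same ℳ
            (by simpa using stmt19_contract_mem_pow d (DirectSum.decompose ℳ u (n + 1)).2)
        · intro m hm hne
          rcases Nat.eq_zero_or_pos m with rfl | hpos
          · rw [stmt19_contract_pow_zero d (DirectSum.decompose ℳ u 0).2]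
            simp
          · refine DirectSum.decompose_of_mem_ne ℳ
              (stmt19_contract_mem_pow d (DirectSum.decompose ℳ u m).2) ?_
            have := hbound m hm
            omega
      have hv0 : v ≠ 0 := by
        intro h
        rw [h] at hvn
        simp only [DirectSum.decompose_zero, DirectSum.zero_apply,
          ZeroMemClass.coe_zero] at hvn
        exact hd hvn.symm
      exact ih v (hC d u hu) hv0 hcompv

end Main2



/-- if `U` is a `K`-subspace of the exterior algebra `Λ(W)` of a
finite-dimensional `K`-vector space `W` (`K` of characteristic 0) that is stable
under left exterior multiplication by every `w ∈ W` and under left contraction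
`ι_λ` by every linear functional `λ ∈ W*`, then `U = {0}` or `U = Λ(W)`. -/
theorem stmt19 (K : Type*) [Field K] [CharZero K]
    (W : Type*) [AddCommGroup W] [Module K W] [FiniteDimensional K W]
    (U : Submodule K (ExteriorAlgebra K W))
    (hW : ∀ (w : W) (u : ExteriorAlgebra K W), u ∈ U → ExteriorAlgebra.ι K w * u ∈ U)
    (hC : ∀ (lam : Module.Dual K W) (u : ExteriorAlgebra K W),
      u ∈ U → CliffordAlgebra.contractLeft lam u ∈ U) :
    U = ⊥ ∨ U = ⊤ := by
  classical
  rcases eq_or_ne U ⊥ with hbot | hbot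
  · exact Or.inl hbot
  right
  obtain ⟨u, hu, hu0⟩ := Submodule.exists_mem_ne_zero_of_ne_bot hbot
  set ℳ' := fun i : ℕ => (⋀[K]^i W : Submodule K (ExteriorAlgebra K W)) with hℳ
  have hone : (1 : ExteriorAlgebra K W) ∈ U := by
    refine stmt19_key U hC ((DirectSum.decompose ℳ' u).support.sup id) u hu hu0 fun m hm => ?_
    by_contra h
    have hmem : m ∈ (DirectSum.decompose ℳ' u).support :=
      DFinsupp.mem_support_iff.mpr fun h' => h (by rw [h']; rfl)
    exact absurd (Finset.le_sup (f := id) hmem) (Nat.not_le.mpr hm)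
  rw [Submodule.eq_top_iff']
  intro x
  induction x using CliffordAlgebra.left_induction with
  | algebraMap r =>
    rw [Algebra.algebraMap_eq_smul_one]
    exact U.smul_mem r hone
  | add x y hx hy => exact U.add_mem hx hy
  | ι_mul x m hx => exact hW m x hx
end
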